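/- arXiv:1506.05231 — 2 statements merged into one kernel-verified Lean document; each statement's English description precedes it below -/
import Mathlib

section
/- The Hausdorff dimension of the set of ρ-heavy channels satisfies dim_H(H(ρ)) = 1 for every ρ ∈ [0,1/2], and dim_H(H(ρ)) ≥ h₂(ρ) for every ρ ∈ (1/2,1], where h₂(x) = −x·log₂x − (1−x)·log₂(1−x) is the binary entropy function. -/
set_option linter.unusedSectionVars false

open Filter Set MeasureTheory Topology ENNReal NNReal

noncomputable section


/-- `g_0(z) = 2z - z²` (bit `false`), `g_1(z) = z²` (bit `true`). -/
def gBit (c : Bool) (z : ℝ) : ℝ := if c then z ^ 2 else 2 * z - z ^ 2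

/-- `pPre b n z = g_{b_n}(g_{b_{n-1}}(⋯ g_{b_1}(z) ⋯))`, where `b_i` is `b (i-1)`. -/
def pPre (b : ℕ → Bool) : ℕ → ℝ → ℝ
  | 0, z => z
  | n + 1, z => gBit (b n) (pPre b n z)

/-- `f(b) = Σ_{n ≥ 1} b_n 2^{-n}`. -/
def fBin (b : ℕ → Bool) : ℝ := ∑' n : ℕ, (if b n then (1 : ℝ) else 0) / 2 ^ (n + 1)

/-- The dyadic rationals in `[0,1]`. -/
def dyadics : Set ℝ := Set.Icc 0 1 ∩ {x : ℝ | ∃ (p : ℤ) (n : ℕ), x = (p : ℝ) / 2 ^ n}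

/-- The good channels of a BEC with erasure probability `ε`: `x ∈ [0,1]` such that some binary
expansion `b` of `x` satisfies `p_{b^n}(ε) → 0`. -/
def Gset (ε : ℝ) : Set ℝ :=
  {x : ℝ | ∃ b : ℕ → Bool, fBin b = x ∧ Tendsto (fun n => pPre b n ε) atTop (nhds 0)}

/-- The bad channels of a BEC with erasure probability `ε`: `x ∈ [0,1]` such that some binary
expansion `b` of `x` satisfies `p_{b^n}(ε) → 1`. -/
def Bset (ε : ℝ) : Set ℝ :=
  {x : ℝ | ∃ b : ℕ → Bool, fBin b = x ∧ Tendsto (fun n => pPre b n ε) atTop (nhds 1)}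

/-- Hamming weight `w(b^n)` of the length-`n` prefix of `b`. -/
def wPre (b : ℕ → Bool) (n : ℕ) : ℕ := ∑ i ∈ Finset.range n, (if b i then 1 else 0)

/-- `b` is `ρ`-heavy: `liminf_{n→∞} (w(b^n) - nρ) ≥ 0` (the liminf computed in `EReal`),
equivalently `liminf 2^{w(b^n)} / 2^{nρ} ≥ 1`. -/
def Heavy (ρ : ℝ) (b : ℕ → Bool) : Prop :=
  0 ≤ atTop.liminf (fun n : ℕ => (((wPre b n : ℝ) - n * ρ : ℝ) : EReal))

/-- The set of `ρ`-heavy channels. -/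
def Hset (ρ : ℝ) : Set ℝ := {x : ℝ | ∃ b : ℕ → Bool, fBin b = x ∧ Heavy ρ b}



namespace HeavyAux

/-- integer prefix of the binary expansion: `kf x n = ⌊x * 2^n⌋` as a natural number. -/
def kf (x : ℝ) (n : ℕ) : ℕ := (⌊x * 2 ^ n⌋).toNat

/-- binary digits of `x`. -/
def dg (x : ℝ) (n : ℕ) : Bool := decide (kf x (n + 1) % 2 = 1)

/-- mass of the dyadic cylinder of level `n` and index `k` under Bernoulli(`p`). -/
def mdy (p : ℝ) : ℕ → ℕ → ℝ
  | 0, _ => 1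
  | n + 1, k => (if k % 2 = 1 then p else 1 - p) * mdy p n (k / 2)

/-- weight (number of ones) of the length-`n` string indexed by `k`. -/
def wdy : ℕ → ℕ → ℕ
  | 0, _ => 0
  | n + 1, k => wdy n (k / 2) + k % 2

/-- cumulative mass of cylinders to the left. -/
def Fdy (p : ℝ) (n k : ℕ) : ℝ := ∑ j ∈ Finset.range k, mdy p n j

section basic

variable {p : ℝ} (hp0 : 0 < p) (hp1 : p < 1)
include hp0 hp1

lemma mdy_nonneg (n k : ℕ) : 0 ≤ mdy p n k := by
  induction n generalizing k with
  | zero => exact zero_le_one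
  | succ n ih =>
    have := ih (k / 2)
    unfold mdy
    split <;> nlinarith

lemma mdy_le_q (n k : ℕ) : mdy p n k ≤ max p (1 - p) ^ n := by
  induction n generalizing k with
  | zero => simp [mdy]
  | succ n ih =>
    have h1 := ih (k / 2)
    have h2 := mdy_nonneg hp0 hp1 n (k / 2)
    have hq0 : (0:ℝ) ≤ max p (1 - p) := le_max_of_le_left hp0.le
    unfold mdy
    rw [pow_succ, mul_comm (max p (1-p) ^ n)]
    split
    · exact mul_le_mul (le_max_left _ _) h1 h2 hq0
    · exact mul_le_mul (le_max_right _ _) h1 h2 hq0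

lemma q_lt_one : max p (1 - p) < 1 := by
  rw [max_lt_iff]; constructor <;> linarith

lemma q_pos : 0 < max p (1 - p) := lt_max_of_lt_left hp0

omit hp0 hp1 in
lemma mdy_succ' (n k : ℕ) : mdy p (n + 1) k = (if k % 2 = 1 then p else 1 - p) * mdy p n (k / 2) := rfl

omit hp0 hp1 in
lemma wdy_succ' (n k : ℕ) : wdy (n + 1) k = wdy n (k / 2) + k % 2 := rfl

lemma mdy_even (n j : ℕ) : mdy p (n + 1) (2 * j) = (1 - p) * mdy p n j := by
  rw [mdy_succ']
  have h1 : 2 * j % 2 = 0 := by omega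
  have h2 : 2 * j / 2 = j := by omega
  rw [h1, h2]; simp

lemma mdy_odd (n j : ℕ) : mdy p (n + 1) (2 * j + 1) = p * mdy p n j := by
  rw [mdy_succ']
  have h1 : (2 * j + 1) % 2 = 1 := by omega
  have h2 : (2 * j + 1) / 2 = j := by omega
  rw [h1, h2]; simp

omit hp0 hp1

lemma sum_range_double (g : ℕ → ℝ) (k : ℕ) :
    ∑ j ∈ Finset.range (2 * k), g j = ∑ i ∈ Finset.range k, (g (2 * i) + g (2 * i + 1)) := by
  induction k with
  | zero => simp
  | succ k ih =>
    have h : 2 * (k + 1) = (2 * k) + 1 + 1 := by ring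
    rw [h, Finset.sum_range_succ, Finset.sum_range_succ, ih, Finset.sum_range_succ]
    ring

include hp0 hp1

lemma Fdy_double (n k : ℕ) : Fdy p (n + 1) (2 * k) = Fdy p n k := by
  unfold Fdy
  rw [sum_range_double]
  refine Finset.sum_congr rfl fun i _ => ?_
  rw [mdy_even hp0 hp1, mdy_odd hp0 hp1]; ring

lemma Fdy_succ (n k : ℕ) : Fdy p n (k + 1) = Fdy p n k + mdy p n k :=
  Finset.sum_range_succ _ _

lemma Fdy_mono (n : ℕ) : Monotone (Fdy p n) := by
  intro a b hab
  exact Finset.sum_le_sum_of_subset_of_nonneg (Finset.range_subset_range.2 hab)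
    (fun j _ _ => mdy_nonneg hp0 hp1 n j)

lemma Fdy_shift (n r k : ℕ) : Fdy p (n + r) (k * 2 ^ r) = Fdy p n k := by
  induction r with
  | zero => simp
  | succ r ih =>
    have h : k * 2 ^ (r + 1) = 2 * (k * 2 ^ r) := by ring
    rw [h, show n + (r + 1) = (n + r) + 1 from rfl, Fdy_double hp0 hp1, ih]

/-- cross-level monotonicity. -/
lemma Fdy_le_Fdy {m n a b : ℕ} (h : (a : ℝ) / 2 ^ m ≤ (b : ℝ) / 2 ^ n) :
    Fdy p m a ≤ Fdy p n b := by
  have key : a * 2 ^ n ≤ b * 2 ^ m := by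
    have h2 : (a : ℝ) * 2 ^ n ≤ (b : ℝ) * 2 ^ m := by
      rw [div_le_div_iff₀ (by positivity) (by positivity)] at h
      linarith
    exact_mod_cast h2
  calc Fdy p m a = Fdy p (m + n) (a * 2 ^ n) := (Fdy_shift hp0 hp1 m n a).symm
    _ ≤ Fdy p (m + n) (b * 2 ^ m) := Fdy_mono hp0 hp1 _ key
    _ = Fdy p n b := by rw [Nat.add_comm]; exact Fdy_shift hp0 hp1 n m b

lemma Fdy_total (n : ℕ) : Fdy p n (2 ^ n) = 1 := by
  induction n with
  | zero => simp [Fdy, mdy]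
  | succ n ih =>
    have h : (2:ℕ) ^ (n + 1) = 2 * 2 ^ n := by ring
    rw [h, Fdy_double hp0 hp1, ih]

lemma Fdy_nonneg (n k : ℕ) : 0 ≤ Fdy p n k :=
  Finset.sum_nonneg fun j _ => mdy_nonneg hp0 hp1 n j

lemma Fdy_le_one {n k : ℕ} (hk : k ≤ 2 ^ n) : Fdy p n k ≤ 1 := by
  rw [← Fdy_total hp0 hp1 n]; exact Fdy_mono hp0 hp1 n hk

lemma mdy_eq_pow (n k : ℕ) :
    mdy p n k = p ^ (wdy n k) * (1 - p) ^ (n - wdy n k) := by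
  induction n generalizing k with
  | zero => simp [mdy, wdy]
  | succ n ih =>
    have hw : wdy n (k / 2) ≤ n := by
      clear ih; induction n generalizing k with
      | zero => simp [wdy]
      | succ n ih => unfold wdy; have := ih (k/2); omega
    rw [mdy_succ', wdy_succ', ih (k / 2)]
    rcases Nat.mod_two_eq_zero_or_one k with h | h
    · rw [h]
      have : n + 1 - (wdy n (k / 2) + 0) = (n - wdy n (k / 2)) + 1 := by omega
      rw [this, if_neg (by omega), pow_succ]
      ring_nf
    · rw [h]
      have : n + 1 - (wdy n (k / 2) + 1) = n - wdy n (k / 2) := by omega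
      rw [this, if_pos rfl, pow_succ]
      ring

lemma wdy_le (n k : ℕ) : wdy n k ≤ n := by
  induction n generalizing k with
  | zero => simp [wdy]
  | succ n ih => unfold wdy; have := ih (k/2); omega

end basic


section kfsec
variable {x : ℝ}

lemma floor_double (y : ℝ) : ⌊y * 2⌋ = 2 * ⌊y⌋ ∨ ⌊y * 2⌋ = 2 * ⌊y⌋ + 1 := by
  have h1 : (2 * ⌊y⌋ : ℤ) ≤ ⌊y * 2⌋ := Int.le_floor.2 (by push_cast; linarith [Int.floor_le y])
  have h2 : ⌊y * 2⌋ < 2 * ⌊y⌋ + 2 := Int.floor_lt.2 (by push_cast; linarith [Int.lt_floor_add_one y])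
  omega

lemma kf_succ_or (hx0 : 0 ≤ x) (n : ℕ) :
    kf x (n + 1) = 2 * kf x n ∨ kf x (n + 1) = 2 * kf x n + 1 := by
  have hnn : (0:ℤ) ≤ ⌊x * 2 ^ n⌋ := Int.floor_nonneg.2 (by positivity)
  have h : x * 2 ^ (n + 1) = x * 2 ^ n * 2 := by ring
  unfold kf
  rw [h]
  rcases floor_double (x * 2 ^ n) with h1 | h1 <;> [left; right] <;> omega

lemma kf_div (hx0 : 0 ≤ x) (n : ℕ) : kf x (n + 1) / 2 = kf x n := by
  rcases kf_succ_or hx0 n with h | h <;> omega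

lemma kf_mod (hx0 : 0 ≤ x) (n : ℕ) :
    kf x (n + 1) % 2 = if dg x n then 1 else 0 := by
  unfold dg
  rcases kf_succ_or hx0 n with h | h <;> rw [h] <;>
    simp [Nat.mul_add_mod, Nat.mul_mod_right]

lemma kf_succ (hx0 : 0 ≤ x) (n : ℕ) :
    kf x (n + 1) = 2 * kf x n + (if dg x n then 1 else 0) := by
  have h0 : kf x (n + 1) = 2 * (kf x (n + 1) / 2) + kf x (n + 1) % 2 := by omega
  rw [h0, kf_div hx0 n, kf_mod hx0 n]

lemma kf_cast (hx0 : 0 ≤ x) (n : ℕ) : (kf x n : ℝ) = ⌊x * 2 ^ n⌋ := by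
  have hnn : (0:ℤ) ≤ ⌊x * 2 ^ n⌋ := Int.floor_nonneg.2 (by positivity)
  unfold kf
  exact_mod_cast congrArg (Int.cast : ℤ → ℝ) (Int.toNat_of_nonneg hnn)

lemma kf_le (hx0 : 0 ≤ x) (n : ℕ) : (kf x n : ℝ) / 2 ^ n ≤ x := by
  rw [div_le_iff₀ (by positivity), kf_cast hx0]
  exact Int.floor_le _

lemma lt_kf_add_one (hx0 : 0 ≤ x) (n : ℕ) : x < ((kf x n : ℝ) + 1) / 2 ^ n := by
  rw [lt_div_iff₀ (by positivity), kf_cast hx0]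
  exact Int.lt_floor_add_one _

lemma kf_lt_pow (hx0 : 0 ≤ x) (hx1 : x < 1) (n : ℕ) : kf x n < 2 ^ n := by
  have h : (kf x n : ℝ) < 2 ^ n := by
    calc (kf x n : ℝ) ≤ x * 2 ^ n := by
          rw [← div_le_iff₀ (by positivity : (0:ℝ) < 2 ^ n)]; exact kf_le hx0 n
    _ < 1 * 2 ^ n := by
          have : (0:ℝ) < 2 ^ n := by positivity
          nlinarith
    _ = 2 ^ n := one_mul _
  exact_mod_cast h

lemma kf_eq_of_mem {k n : ℕ} (h : x ∈ Ico ((k : ℝ) / 2 ^ n) ((k + 1 : ℝ) / 2 ^ n)) :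
    kf x n = k := by
  have hx0 : 0 ≤ x := le_trans (by positivity) h.1
  have h1 : (k : ℝ) ≤ x * 2 ^ n := by
    rw [← div_le_iff₀ (by positivity : (0:ℝ) < 2 ^ n)]; exact h.1
  have h2 : x * 2 ^ n < (k : ℝ) + 1 := by
    rw [← lt_div_iff₀ (by positivity : (0:ℝ) < 2 ^ n)]; exact h.2
  have : ⌊x * 2 ^ n⌋ = (k : ℤ) := by
    rw [Int.floor_eq_iff]
    constructor <;> [exact_mod_cast h1; exact_mod_cast h2]
  unfold kf
  omega

lemma kf_mono {y : ℝ} (hxy : x ≤ y) (n : ℕ) : kf x n ≤ kf y n := by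
  unfold kf
  have := Int.floor_le_floor (mul_le_mul_of_nonneg_right hxy (by positivity : (0:ℝ) ≤ 2 ^ n))
  omega

lemma kf_zero_eq (hx0 : 0 ≤ x) (hx1 : x < 1) : kf x 0 = 0 := by
  have := kf_lt_pow hx0 hx1 0
  omega

end kfsec
end HeavyAux

namespace HeavyAux
section fbin
variable {x : ℝ}

lemma wPre_dg (hx0 : 0 ≤ x) (n : ℕ) : wPre (dg x) n = wdy n (kf x n) := by
  induction n with
  | zero => rfl
  | succ n ih =>
    rw [wPre, Finset.sum_range_succ, ← wPre, ih, wdy_succ', kf_div hx0, kf_mod hx0]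

lemma partial_fBin (hx0 : 0 ≤ x) (hx1 : x < 1) (n : ℕ) :
    ∑ i ∈ Finset.range n, (if dg x i then (1:ℝ) else 0) / 2 ^ (i + 1)
      = (kf x n : ℝ) / 2 ^ n := by
  induction n with
  | zero => simp [kf_zero_eq hx0 hx1]
  | succ n ih =>
    rw [Finset.sum_range_succ, ih, kf_succ hx0]
    push_cast
    split <;> (field_simp; ring)

lemma summable_fBin (b : ℕ → Bool) :
    Summable (fun n : ℕ => (if b n then (1:ℝ) else 0) / 2 ^ (n + 1)) := by
  have hg : Summable (fun n : ℕ => ((1:ℝ)/2) ^ n) :=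
    summable_geometric_of_lt_one (by norm_num) (by norm_num)
  apply Summable.of_nonneg_of_le (fun n => by positivity) (fun n => ?_) hg
  rw [div_pow, one_pow]
  have h2 : (0:ℝ) < 2 ^ n := by positivity
  have h3 : (0:ℝ) < 2 ^ (n+1) := by positivity
  split
  · rw [div_le_div_iff₀ h3 h2, one_mul, pow_succ]
    nlinarith
  · simp only [zero_div]
    positivity

lemma tendsto_kf_div (hx0 : 0 ≤ x) : Tendsto (fun n => (kf x n : ℝ) / 2 ^ n) atTop (𝓝 x) := by
  have h1 : Tendsto (fun n : ℕ => x - ((1:ℝ)/2) ^ n) atTop (𝓝 (x - 0)) :=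
    tendsto_const_nhds.sub (tendsto_pow_atTop_nhds_zero_of_lt_one (by norm_num) (by norm_num))
  rw [sub_zero] at h1
  apply tendsto_of_tendsto_of_tendsto_of_le_of_le h1 tendsto_const_nhds
  · intro n
    have h4 := (lt_kf_add_one hx0 n).le
    have h2 : (0:ℝ) < 2 ^ n := by positivity
    have heq : ((kf x n : ℝ) + 1) / 2 ^ n = (kf x n : ℝ) / 2 ^ n + (1/2) ^ n := by
      rw [div_pow, one_pow]
      field_simp
    rw [heq] at h4
    dsimp only
    linarith
  · exact fun n => kf_le hx0 n

lemma fBin_dg (hx0 : 0 ≤ x) (hx1 : x < 1) : fBin (dg x) = x := by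
  have hs := summable_fBin (dg x)
  have htend : Tendsto (fun n => ∑ i ∈ Finset.range n,
      (if dg x i then (1:ℝ) else 0) / 2 ^ (i + 1)) atTop (𝓝 (fBin (dg x))) :=
    hs.hasSum.tendsto_sum_nat
  have htend' := htend.congr (fun n => partial_fBin hx0 hx1 n)
  exact tendsto_nhds_unique htend' (tendsto_kf_div hx0)

end fbin
end HeavyAux

namespace HeavyAux
section FF
variable {p : ℝ} (hp0 : 0 < p) (hp1 : p < 1)

/-- summand of the CDF. -/
def tm (p x : ℝ) (i : ℕ) : ℝ := if dg x i then (1 - p) * mdy p i (kf x i) else 0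

/-- The CDF of the Bernoulli(`p`) measure on binary expansions. -/
def Ffun (p x : ℝ) : ℝ := if x < 0 then 0 else if 1 ≤ x then 1 else ∑' i, tm p x i

include hp0 hp1

lemma tm_nonneg (x : ℝ) (i : ℕ) : 0 ≤ tm p x i := by
  unfold tm
  split
  · have := mdy_nonneg hp0 hp1 i (kf x i)
    nlinarith
  · exact le_refl 0

lemma tm_le (x : ℝ) (i : ℕ) : tm p x i ≤ max p (1 - p) ^ i := by
  unfold tm
  have h1 := mdy_le_q hp0 hp1 i (kf x i)
  have h2 := mdy_nonneg hp0 hp1 i (kf x i)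
  have h3 : (0:ℝ) ≤ max p (1-p) := le_max_of_le_left hp0.le
  split
  · nlinarith
  · positivity

lemma summable_tm (x : ℝ) : Summable (tm p x) :=
  Summable.of_nonneg_of_le (tm_nonneg hp0 hp1 x) (tm_le hp0 hp1 x)
    (summable_geometric_of_lt_one (le_max_of_le_left hp0.le) (q_lt_one hp0 hp1))

lemma partial_tm {x : ℝ} (hx0 : 0 ≤ x) (hx1 : x < 1) (n : ℕ) :
    ∑ i ∈ Finset.range n, tm p x i = Fdy p n (kf x n) := by
  induction n with
  | zero => simp [Fdy, kf_zero_eq hx0 hx1]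
  | succ n ih =>
    rw [Finset.sum_range_succ, ih, kf_succ hx0]
    unfold tm
    by_cases h : dg x n
    · rw [if_pos h, if_pos h, ← Fdy_double hp0 hp1, ← mdy_even hp0 hp1, ← Fdy_succ hp0 hp1]
    · rw [if_neg h, if_neg h, add_zero, add_zero, Fdy_double hp0 hp1]

lemma Ffun_of_mem {x : ℝ} (hx0 : 0 ≤ x) (hx1 : x < 1) : Ffun p x = ∑' i, tm p x i := by
  unfold Ffun
  rw [if_neg (not_lt.2 hx0), if_neg (not_le.2 hx1)]

lemma Fdy_kf_le_Ffun {x : ℝ} (hx0 : 0 ≤ x) (hx1 : x < 1) (n : ℕ) :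
    Fdy p n (kf x n) ≤ Ffun p x := by
  rw [Ffun_of_mem hp0 hp1 hx0 hx1, ← partial_tm hp0 hp1 hx0 hx1]
  exact (summable_tm hp0 hp1 x).sum_le_tsum _ (fun i _ => tm_nonneg hp0 hp1 x i)

lemma Ffun_le_Fdy {x : ℝ} (hx0 : 0 ≤ x) (hx1 : x < 1) {n b : ℕ}
    (h : x < (b : ℝ) / 2 ^ n) : Ffun p x ≤ Fdy p n b := by
  rw [Ffun_of_mem hp0 hp1 hx0 hx1]
  refine Real.tsum_le_of_sum_range_le (tm_nonneg hp0 hp1 x) (fun m => ?_)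
  rw [partial_tm hp0 hp1 hx0 hx1]
  exact Fdy_le_Fdy hp0 hp1 (le_trans (kf_le hx0 m) h.le)

lemma Ffun_nonneg (x : ℝ) : 0 ≤ Ffun p x := by
  unfold Ffun
  split
  · exact le_refl 0
  · split
    · exact zero_le_one
    · exact tsum_nonneg (tm_nonneg hp0 hp1 x)

lemma Ffun_le_one (x : ℝ) : Ffun p x ≤ 1 := by
  by_cases hx0 : x < 0
  · unfold Ffun; rw [if_pos hx0]; exact zero_le_one
  by_cases hx1 : 1 ≤ x
  · unfold Ffun; rw [if_neg hx0, if_pos hx1]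
  push_neg at hx0 hx1
  have h := Ffun_le_Fdy hp0 hp1 hx0 hx1 (n := 0) (b := 1) (by simpa using hx1)
  calc Ffun p x ≤ Fdy p 0 1 := h
    _ = 1 := by simp [Fdy, mdy]

lemma Ffun_mono : Monotone (Ffun p) := by
  intro x y hxy
  by_cases hy0 : y < 0
  · unfold Ffun
    rw [if_pos hy0, if_pos (lt_of_le_of_lt hxy hy0)]
  by_cases hx0 : x < 0
  · unfold Ffun
    rw [if_pos hx0]
    push_neg at hy0
    rw [← Ffun]  -- restore
    exact Ffun_nonneg hp0 hp1 y
  push_neg at hy0 hx0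
  by_cases hy1 : 1 ≤ y
  · calc Ffun p x ≤ 1 := Ffun_le_one hp0 hp1 x
      _ = Ffun p y := by unfold Ffun; rw [if_neg (not_lt.2 hy0), if_pos hy1]
  push_neg at hy1
  have hx1 : x < 1 := lt_of_le_of_lt hxy hy1
  rw [Ffun_of_mem hp0 hp1 hx0 hx1]
  refine Real.tsum_le_of_sum_range_le (tm_nonneg hp0 hp1 x) (fun m => ?_)
  rw [partial_tm hp0 hp1 hx0 hx1]
  calc Fdy p m (kf x m) ≤ Fdy p m (kf y m) := Fdy_mono hp0 hp1 m (kf_mono hxy m)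
    _ ≤ Ffun p y := Fdy_kf_le_Ffun hp0 hp1 hy0 hy1 m

lemma Ffun_one : Ffun p 1 = 1 := by
  unfold Ffun; rw [if_neg (by norm_num), if_pos le_rfl]

lemma Ffun_dyadic {n k : ℕ} (hk : k ≤ 2 ^ n) : Ffun p ((k : ℝ) / 2 ^ n) = Fdy p n k := by
  rcases eq_or_lt_of_le hk with hk2 | hk2
  · subst hk2
    have hc : (((2:ℕ) ^ n : ℕ) : ℝ) / 2 ^ n = 1 := by push_cast; field_simp
    rw [hc, Ffun_one hp0 hp1, Fdy_total hp0 hp1]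
  · set x := (k : ℝ) / 2 ^ n with hxdef
    have hx0 : 0 ≤ x := by positivity
    have hx1 : x < 1 := by
      rw [hxdef, div_lt_one (by positivity)]
      exact_mod_cast hk2
    have hkf : kf x n = k := by
      apply kf_eq_of_mem
      constructor
      · exact le_refl _
      · rw [hxdef, div_lt_div_iff_of_pos_right (by positivity)]
        linarith
    apply le_antisymm
    · -- Ffun ≤ Fdy n k via limit
      have key : ∀ m : ℕ, Ffun p x ≤ Fdy p n k + max p (1-p) ^ (n + m) := by
        intro m
        have hlt : x < ((k * 2 ^ m + 1 : ℕ) : ℝ) / 2 ^ (n + m) := by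
          push_cast
          rw [hxdef, div_lt_div_iff₀ (by positivity) (by positivity)]
          ring_nf
          nlinarith [pow_pos (by norm_num : (0:ℝ) < 2) n, pow_pos (by norm_num : (0:ℝ) < 2) m,
            pow_pos (by norm_num : (0:ℝ) < 2) (n+m)]
        calc Ffun p x ≤ Fdy p (n + m) (k * 2 ^ m + 1) := Ffun_le_Fdy hp0 hp1 hx0 hx1 hlt
          _ = Fdy p (n + m) (k * 2 ^ m) + mdy p (n + m) (k * 2 ^ m) := Fdy_succ hp0 hp1 _ _
          _ ≤ Fdy p n k + max p (1-p) ^ (n + m) := by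
              rw [Fdy_shift hp0 hp1]
              exact add_le_add le_rfl (mdy_le_q hp0 hp1 _ _)
      have hq0 : (0:ℝ) ≤ max p (1-p) := le_max_of_le_left hp0.le
      have hq1 := q_lt_one hp0 hp1
      have hlim : Tendsto (fun m : ℕ => Fdy p n k + max p (1-p) ^ (n + m)) atTop
          (𝓝 (Fdy p n k + 0)) := by
        apply tendsto_const_nhds.add
        have h1 : Tendsto (fun m : ℕ => max p (1-p) ^ m) atTop (𝓝 0) :=
          tendsto_pow_atTop_nhds_zero_of_lt_one hq0 hq1
        have h2 : Tendsto (fun m : ℕ => n + m) atTop atTop :=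
          tendsto_atTop_mono (fun m => Nat.le_add_left m n) tendsto_id
        exact h1.comp h2
      rw [add_zero] at hlim
      exact ge_of_tendsto hlim (Filter.Eventually.of_forall key)
    · rw [← hkf]
      exact Fdy_kf_le_Ffun hp0 hp1 hx0 hx1 n

lemma Ffun_zero : Ffun p 0 = 0 := by
  have := Ffun_dyadic hp0 hp1 (n := 0) (k := 0) (by norm_num)
  simpa [Fdy] using this

/-- key approximation: if `x ∈ [0,1)`, `x ≤ y < x + 2⁻ᵐ`, then `Ffun p y ≤ Fdy p m (kf x m + 2)`. -/
lemma Ffun_approx {x y : ℝ} (m : ℕ) (hx0 : 0 ≤ x) (hx1 : x < 1) (hxy : x ≤ y)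
    (hlt : y < x + 1 / 2 ^ m) : Ffun p y ≤ Fdy p m (kf x m + 2) := by
  by_cases hy1 : 1 ≤ y
  · -- then kf x m + 2 ≥ 2^m
    have h1 : (2 ^ m : ℝ) - 1 < (kf x m : ℝ) + 1 := by
      have hfl := lt_kf_add_one hx0 m
      have h2 : (0:ℝ) < 2 ^ m := by positivity
      rw [lt_div_iff₀ h2] at hfl
      have h5 : 1 - 1/2^m ≤ x := by linarith
      have h6 : (1 - 1/2^m) * 2^m ≤ x * 2^m := mul_le_mul_of_nonneg_right h5 h2.le
      have h7 : (1 - 1/2^m : ℝ) * 2^m = 2^m - 1 := by field_simp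
      linarith
    have h2 : 2 ^ m ≤ kf x m + 2 := by
      have h3 : (2 ^ m : ℝ) < ((kf x m : ℕ) : ℝ) + 2 := by linarith
      have h4 : (2 ^ m : ℕ) < kf x m + 2 := by exact_mod_cast h3
      omega
    calc Ffun p y ≤ 1 := Ffun_le_one hp0 hp1 y
      _ = Fdy p m (2 ^ m) := (Fdy_total hp0 hp1 m).symm
      _ ≤ Fdy p m (kf x m + 2) := Fdy_mono hp0 hp1 m h2
  · push_neg at hy1
    have hy0 : 0 ≤ y := le_trans hx0 hxy
    apply Ffun_le_Fdy hp0 hp1 hy0 hy1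
    have h3 := lt_kf_add_one hx0 m
    have h2 : (0:ℝ) < 2 ^ m := by positivity
    rw [lt_div_iff₀ h2] at h3
    push_cast
    rw [lt_div_iff₀ h2]
    have : x * 2 ^ m < (kf x m : ℝ) + 1 := h3
    have h4 : y * 2 ^ m < x * 2 ^ m + 1 := by
      have := mul_lt_mul_of_pos_right hlt h2
      have h5 : (x + 1 / 2 ^ m) * 2 ^ m = x * 2 ^ m + 1 := by field_simp
      linarith [h5 ▸ this]
    linarith

lemma Fdy_window (m : ℕ) (k : ℕ) :
    Fdy p m (k + 2) - Fdy p m k ≤ 2 * max p (1-p) ^ m := by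
  rw [Fdy_succ hp0 hp1, Fdy_succ hp0 hp1]
  have := mdy_le_q hp0 hp1 m k
  have := mdy_le_q hp0 hp1 m (k+1)
  linarith

lemma Ffun_rightCont (x : ℝ) : ContinuousWithinAt (Ffun p) (Ici x) x := by
  by_cases hx0 : x < 0
  · have hev : ∀ᶠ y in 𝓝[Ici x] x, Ffun p y = 0 := by
      have : Iio (0:ℝ) ∈ 𝓝[Ici x] x := nhdsWithin_le_nhds (Iio_mem_nhds hx0)
      filter_upwards [this] with y hy
      unfold Ffun
      rw [if_pos (show y < 0 from hy)]
    have h0 : Ffun p x = 0 := by unfold Ffun; rw [if_pos hx0]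
    rw [ContinuousWithinAt, h0]
    exact Tendsto.congr' (hev.mono fun y h => h.symm) tendsto_const_nhds
  by_cases hx1 : 1 ≤ x
  · have hev : ∀ᶠ y in 𝓝[Ici x] x, Ffun p y = 1 := by
      filter_upwards [self_mem_nhdsWithin] with y hy
      unfold Ffun
      rw [if_neg (not_lt.2 (le_trans (le_trans zero_le_one hx1) hy)), if_pos (le_trans hx1 hy)]
    have h0 : Ffun p x = 1 := by
      unfold Ffun
      rw [if_neg (not_lt.2 (le_trans zero_le_one hx1)), if_pos hx1]
    rw [ContinuousWithinAt, h0]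
    exact Tendsto.congr' (hev.mono fun y h => h.symm) tendsto_const_nhds
  push_neg at hx0 hx1
  rw [ContinuousWithinAt, Metric.tendsto_nhdsWithin_nhds]
  intro ε hε
  have hq0 : (0:ℝ) ≤ max p (1-p) := le_max_of_le_left hp0.le
  have hq1 := q_lt_one hp0 hp1
  obtain ⟨m, hm⟩ : ∃ m : ℕ, 2 * max p (1-p) ^ m < ε := by
    have := tendsto_pow_atTop_nhds_zero_of_lt_one hq0 hq1
    have h2 : Tendsto (fun m : ℕ => 2 * max p (1-p) ^ m) atTop (𝓝 (2 * 0)) :=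
      this.const_mul 2
    rw [mul_zero] at h2
    exact ((h2.eventually (eventually_lt_nhds hε)).exists)
  refine ⟨1 / 2 ^ m, by positivity, fun {y} hy hd => ?_⟩
  have hxy : x ≤ y := hy
  rw [Real.dist_eq, abs_lt] at hd
  have hlt : y < x + 1 / 2 ^ m := by linarith [hd.2]
  have hup := Ffun_approx hp0 hp1 m hx0 hx1 hxy hlt
  have hlow : Fdy p m (kf x m) ≤ Ffun p x := Fdy_kf_le_Ffun hp0 hp1 hx0 hx1 m
  have hmono : Ffun p x ≤ Ffun p y := Ffun_mono hp0 hp1 hxy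
  have hwin := Fdy_window hp0 hp1 m (kf x m)
  rw [Real.dist_eq, abs_of_nonneg (by linarith)]
  linarith

lemma Ffun_leftTendsto (b : ℝ) : Tendsto (Ffun p) (𝓝[<] b) (𝓝 (Ffun p b)) := by
  by_cases hb0 : b ≤ 0
  · have hev : ∀ᶠ y in 𝓝[<] b, Ffun p y = 0 := by
      filter_upwards [self_mem_nhdsWithin] with y hy
      unfold Ffun
      rw [if_pos (lt_of_lt_of_le hy hb0)]
    have h0 : Ffun p b = 0 := by
      rcases lt_or_eq_of_le hb0 with h | h
      · unfold Ffun; rw [if_pos h]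
      · rw [h]; exact Ffun_zero hp0 hp1
    rw [h0]
    exact Tendsto.congr' (hev.mono fun y h => h.symm) tendsto_const_nhds
  by_cases hb1 : 1 < b
  · have hev : ∀ᶠ y in 𝓝[<] b, Ffun p y = 1 := by
      have : Ioi (1:ℝ) ∈ 𝓝[<] b := nhdsWithin_le_nhds (Ioi_mem_nhds hb1)
      filter_upwards [this] with y hy
      unfold Ffun
      rw [if_neg (not_lt.2 (le_trans zero_le_one (le_of_lt (show (1:ℝ) < y from hy)))), if_pos (le_of_lt (show (1:ℝ) < y from hy))]
    have h0 : Ffun p b = 1 := by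
      unfold Ffun
      rw [if_neg (not_lt.2 (le_trans zero_le_one hb1.le)), if_pos hb1.le]
    rw [h0]
    exact Tendsto.congr' (hev.mono fun y h => h.symm) tendsto_const_nhds
  push_neg at hb0 hb1
  -- b ∈ (0, 1]
  rw [Metric.tendsto_nhdsWithin_nhds]
  intro ε hε
  have hq0 : (0:ℝ) ≤ max p (1-p) := le_max_of_le_left hp0.le
  have hq1 := q_lt_one hp0 hp1
  obtain ⟨m, hm⟩ : ∃ m : ℕ, 2 * max p (1-p) ^ m < ε := by
    have := tendsto_pow_atTop_nhds_zero_of_lt_one hq0 hq1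
    have h2 : Tendsto (fun m : ℕ => 2 * max p (1-p) ^ m) atTop (𝓝 (2 * 0)) :=
      this.const_mul 2
    rw [mul_zero] at h2
    exact ((h2.eventually (eventually_lt_nhds hε)).exists)
  refine ⟨min (1 / 2 ^ m) b, lt_min (by positivity) hb0, fun {y} hy hd => ?_⟩
  rw [Real.dist_eq, abs_lt] at hd
  have hy0 : 0 ≤ y := by
    have h1 := hd.1
    have h2 : min ((1:ℝ) / 2 ^ m) b ≤ b := min_le_right _ _
    linarith
  have hyb : y < b := hy
  have hy1 : y < 1 := lt_of_lt_of_le hyb hb1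
  have hlt : b < y + 1 / 2 ^ m := by
    have := hd.1
    have h2 : min ((1:ℝ) / 2 ^ m) b ≤ 1 / 2 ^ m := min_le_left _ _
    linarith
  have hup := Ffun_approx hp0 hp1 m hy0 hy1 hyb.le hlt
  have hlow : Fdy p m (kf y m) ≤ Ffun p y := Fdy_kf_le_Ffun hp0 hp1 hy0 hy1 m
  have hmono : Ffun p y ≤ Ffun p b := Ffun_mono hp0 hp1 hyb.le
  have hwin := Fdy_window hp0 hp1 m (kf y m)
  rw [Real.dist_eq, abs_of_nonpos (by linarith)]
  linarith

/-- The Stieltjes function attached to `Ffun`. -/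
def FS (p : ℝ) (hp0 : 0 < p) (hp1 : p < 1) : StieltjesFunction ℝ where
  toFun := Ffun p
  mono' := Ffun_mono hp0 hp1
  right_continuous' := Ffun_rightCont hp0 hp1

/-- the Bernoulli measure on `[0,1]`. -/
def bmu (p : ℝ) (hp0 : 0 < p) (hp1 : p < 1) : Measure ℝ := (FS p hp0 hp1).measure

lemma leftLim_Ffun (b : ℝ) : Function.leftLim (Ffun p) b = Ffun p b :=
  leftLim_eq_of_tendsto (Ffun_leftTendsto hp0 hp1 b)

lemma bmu_Ico (a b : ℝ) : bmu p hp0 hp1 (Ico a b) = ENNReal.ofReal (Ffun p b - Ffun p a) := by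
  unfold bmu
  rw [StieltjesFunction.measure_Ico]
  show ENNReal.ofReal (Function.leftLim (Ffun p) b - Function.leftLim (Ffun p) a) = _
  rw [leftLim_Ffun hp0 hp1, leftLim_Ffun hp0 hp1]

lemma bmu_cyl {n k : ℕ} (hk : k < 2 ^ n) :
    bmu p hp0 hp1 (Ico ((k : ℝ) / 2 ^ n) (((k : ℝ) + 1) / 2 ^ n)) = ENNReal.ofReal (mdy p n k) := by
  have hc : ((k : ℝ) + 1) = ((k + 1 : ℕ) : ℝ) := by push_cast; ring
  rw [bmu_Ico hp0 hp1, hc, Ffun_dyadic hp0 hp1 (le_of_lt hk),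
    Ffun_dyadic hp0 hp1 hk, Fdy_succ hp0 hp1]
  ring_nf

lemma bmu_Ico01 : bmu p hp0 hp1 (Ico 0 1) = 1 := by
  rw [bmu_Ico hp0 hp1, Ffun_one hp0 hp1, Ffun_zero hp0 hp1]
  norm_num

lemma bmu_singleton (x : ℝ) : bmu p hp0 hp1 {x} = 0 := by
  unfold bmu
  rw [StieltjesFunction.measure_singleton]
  show ENNReal.ofReal (Ffun p x - Function.leftLim (Ffun p) x) = 0
  rw [leftLim_Ffun hp0 hp1, sub_self, ENNReal.ofReal_zero]

end FF
end HeavyAux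

namespace HeavyAux
section tails
variable {p : ℝ} (hp0 : 0 < p) (hp1 : p < 1)
include hp0 hp1

lemma sum_mdy_mgf (l : ℝ) (n : ℕ) :
    ∑ k ∈ Finset.range (2 ^ n), l ^ (wdy n k) * mdy p n k = (l * p + (1 - p)) ^ n := by
  induction n with
  | zero => simp [wdy, mdy]
  | succ n ih =>
    have h2 : (2:ℕ) ^ (n+1) = 2 * 2 ^ n := by ring
    rw [h2, sum_range_double]
    have hterm : ∀ j : ℕ, l ^ wdy (n+1) (2*j) * mdy p (n+1) (2*j)
        + l ^ wdy (n+1) (2*j+1) * mdy p (n+1) (2*j+1)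
        = (l * p + (1 - p)) * (l ^ wdy n j * mdy p n j) := by
      intro j
      have e1 : (2*j) / 2 = j := by omega
      have e2 : (2*j) % 2 = 0 := by omega
      have e3 : (2*j+1) / 2 = j := by omega
      have e4 : (2*j+1) % 2 = 1 := by omega
      have hw0 : wdy (n+1) (2*j) = wdy n j := by rw [wdy_succ', e1, e2]; omega
      have hw1 : wdy (n+1) (2*j+1) = wdy n j + 1 := by rw [wdy_succ', e3, e4]
      rw [hw0, hw1, mdy_even hp0 hp1, mdy_odd hp0 hp1, pow_succ]
      ring
    rw [Finset.sum_congr rfl (fun j _ => hterm j), ← Finset.mul_sum, ih, pow_succ]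
    ring

lemma tail_sum_le {n : ℕ} {A l : ℝ} (hl : 0 < l) (S : Finset ℕ)
    (hS : S ⊆ Finset.range (2 ^ n))
    (hw : ∀ k ∈ S, (1:ℝ) ≤ l ^ ((wdy n k : ℝ) - A)) :
    ∑ k ∈ S, mdy p n k ≤ l ^ (-A) * (l * p + (1 - p)) ^ n := by
  have step1 : ∑ k ∈ S, mdy p n k ≤ ∑ k ∈ S, l ^ ((wdy n k : ℝ) - A) * mdy p n k := by
    apply Finset.sum_le_sum
    intro k hk
    have h1 := hw k hk
    have h2 := mdy_nonneg hp0 hp1 n k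
    nlinarith
  have step2 : ∀ k, l ^ ((wdy n k : ℝ) - A) * mdy p n k
      = l ^ (-A) * (l ^ (wdy n k) * mdy p n k) := by
    intro k
    rw [sub_eq_add_neg, Real.rpow_add hl, Real.rpow_natCast]
    ring
  rw [Finset.sum_congr rfl (fun k _ => step2 k), ← Finset.mul_sum] at step1
  have step3 : ∑ k ∈ S, l ^ (wdy n k) * mdy p n k
      ≤ ∑ k ∈ Finset.range (2 ^ n), l ^ (wdy n k) * mdy p n k := by
    apply Finset.sum_le_sum_of_subset_of_nonneg hS
    intro k _ _
    have h2 := mdy_nonneg hp0 hp1 n k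
    positivity
  calc ∑ k ∈ S, mdy p n k ≤ l ^ (-A) * ∑ k ∈ S, l ^ (wdy n k) * mdy p n k := step1
    _ ≤ l ^ (-A) * ∑ k ∈ Finset.range (2 ^ n), l ^ (wdy n k) * mdy p n k := by
        apply mul_le_mul_of_nonneg_left step3 (Real.rpow_nonneg hl.le _)
    _ = l ^ (-A) * (l * p + (1 - p)) ^ n := by rw [sum_mdy_mgf hp0 hp1]

omit hp0 hp1

lemma exp_upper_aux {t : ℝ} (ht0 : 0 ≤ t) (ht1 : t ≤ 1) :
    Real.exp t ≤ 1 + t + (3/4) * t ^ 2 := by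
  have h := Real.exp_bound (x := t) (by rw [abs_of_nonneg ht0]; exact ht1) (n := 2) (by norm_num)
  rw [abs_of_nonneg ht0] at h
  have h2 : ∑ m ∈ Finset.range 2, t ^ m / m.factorial = 1 + t := by
    norm_num [Finset.sum_range_succ]
  rw [h2] at h
  have h4 := (abs_sub_le_iff.1 h).1
  norm_num [Nat.factorial] at h4
  nlinarith [h4]

lemma exp_lower_aux {t : ℝ} (ht0 : 0 ≤ t) (ht1 : t ≤ 1) :
    Real.exp (-t) ≤ 1 - t + (3/4) * t ^ 2 := by
  have h := Real.exp_bound (x := -t) (by rw [abs_neg, abs_of_nonneg ht0]; exact ht1)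
    (n := 2) (by norm_num)
  rw [abs_neg, abs_of_nonneg ht0] at h
  have h2 : ∑ m ∈ Finset.range 2, (-t) ^ m / m.factorial = 1 - t := by
    rw [Finset.sum_range_succ, Finset.sum_range_one]
    push_cast [Nat.factorial]
    ring
  rw [h2] at h
  have h4 := (abs_sub_le_iff.1 h).1
  norm_num [Nat.factorial] at h4
  nlinarith [h4]

include hp0 hp1

/-- the bad-weight index set at level `n`. -/
def badF (p ε : ℝ) (n : ℕ) : Finset ℕ :=
  (Finset.range (2 ^ n)).filter (fun k => ε * n < |(wdy n k : ℝ) - n * p|)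

lemma bad_sum_le {ε : ℝ} (hε0 : 0 < ε) (hε1 : ε ≤ 1) (n : ℕ) :
    ∑ k ∈ badF p ε n, mdy p n k ≤ 2 * Real.exp (-(ε ^ 2 / 4)) ^ n := by
  set t := ε / 2 with htdef
  have ht0 : 0 ≤ t := by positivity
  have ht1 : t ≤ 1 := by rw [htdef]; linarith
  -- upper tail
  have hU : ∑ k ∈ (Finset.range (2 ^ n)).filter (fun k => n * p + ε * n < (wdy n k : ℝ)),
      mdy p n k ≤ Real.exp (-(ε ^ 2 / 4)) ^ n := by
    have hl : (0:ℝ) < Real.exp t := Real.exp_pos t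
    have := tail_sum_le hp0 hp1 (A := n * p + ε * n) (l := Real.exp t) hl
      ((Finset.range (2 ^ n)).filter (fun k => n * p + ε * n < (wdy n k : ℝ)))
      (Finset.filter_subset _ _) ?hyp
    case hyp =>
      intro k hk
      rw [Finset.mem_filter] at hk
      exact Real.one_le_rpow (Real.one_le_exp ht0) (by linarith [hk.2])
    refine le_trans this ?_
    -- (exp t)^(-(A)) * (exp t * p + 1 - p)^n ≤ exp(-(ε²/4))^n
    have hb : Real.exp t * p + (1 - p) ≤ Real.exp (p * t + (3/4) * t ^ 2) := by
      have h1 := exp_upper_aux ht0 ht1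
      have h2 : Real.exp t * p + (1 - p) ≤ 1 + p * (t + (3/4) * t^2) := by nlinarith
      have h3 := Real.add_one_le_exp (p * (t + (3/4) * t^2))
      have h4 : p * t + (3/4) * t ^ 2 ≥ p * (t + (3/4)*t^2) := by nlinarith
      calc Real.exp t * p + (1 - p) ≤ p * (t + (3/4) * t^2) + 1 := by linarith
        _ ≤ Real.exp (p * (t + (3/4) * t^2)) := h3
        _ ≤ Real.exp (p * t + (3/4) * t ^ 2) := Real.exp_le_exp.2 h4
    have hbn : (Real.exp t * p + (1 - p)) ^ n ≤ Real.exp (p * t + (3/4) * t ^ 2) ^ n := by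
      apply pow_le_pow_left₀ (by nlinarith [Real.exp_pos t, Real.add_one_le_exp t]) hb
    have hA : (Real.exp t) ^ (-(n * p + ε * n)) = Real.exp (-(n * p + ε * n) * t) := by
      rw [Real.rpow_def_of_pos (Real.exp_pos t), Real.log_exp]
      ring_nf
    calc (Real.exp t) ^ (-(n * p + ε * n)) * (Real.exp t * p + (1 - p)) ^ n
        ≤ Real.exp (-(n * p + ε * n) * t) * Real.exp (p * t + (3/4) * t ^ 2) ^ n := by
          rw [hA]
          exact mul_le_mul_of_nonneg_left hbn (Real.exp_pos _).le
      _ = Real.exp (-(n * p + ε * n) * t + n * (p * t + (3/4) * t ^ 2)) := by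
          rw [← Real.exp_nat_mul, ← Real.exp_add]
      _ ≤ Real.exp (n * (-(ε ^ 2 / 4))) := by
          apply Real.exp_le_exp.2
          have hn0 : (0:ℕ) ≤ n := Nat.zero_le n
          have hnn : (0:ℝ) ≤ (n:ℝ) := Nat.cast_nonneg n
          rw [htdef]
          ring_nf
          nlinarith [sq_nonneg ε, mul_nonneg hnn (sq_nonneg ε)]
      _ = Real.exp (-(ε ^ 2 / 4)) ^ n := Real.exp_nat_mul _ n
  -- lower tail
  have hL : ∑ k ∈ (Finset.range (2 ^ n)).filter (fun k => (wdy n k : ℝ) < n * p - ε * n),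
      mdy p n k ≤ Real.exp (-(ε ^ 2 / 4)) ^ n := by
    have hl : (0:ℝ) < Real.exp (-t) := Real.exp_pos _
    have := tail_sum_le hp0 hp1 (A := n * p - ε * n) (l := Real.exp (-t)) hl
      ((Finset.range (2 ^ n)).filter (fun k => (wdy n k : ℝ) < n * p - ε * n))
      (Finset.filter_subset _ _) ?hyp2
    case hyp2 =>
      intro k hk
      rw [Finset.mem_filter] at hk
      apply Real.one_le_rpow_of_pos_of_le_one_of_nonpos hl (Real.exp_le_one_iff.2 (by linarith))
      linarith [hk.2]
    refine le_trans this ?_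
    have hb : Real.exp (-t) * p + (1 - p) ≤ Real.exp (-(p * t) + (3/4) * t ^ 2) := by
      have h1 := exp_lower_aux ht0 ht1
      have h3 := Real.add_one_le_exp (p * (-t + (3/4) * t^2))
      have h4 : -(p * t) + (3/4) * t ^ 2 ≥ p * (-t + (3/4)*t^2) := by nlinarith
      calc Real.exp (-t) * p + (1 - p) ≤ p * (-t + (3/4) * t^2) + 1 := by nlinarith
        _ ≤ Real.exp (p * (-t + (3/4) * t^2)) := h3
        _ ≤ Real.exp (-(p * t) + (3/4) * t ^ 2) := Real.exp_le_exp.2 h4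
    have hbn : (Real.exp (-t) * p + (1 - p)) ^ n ≤ Real.exp (-(p * t) + (3/4) * t ^ 2) ^ n := by
      apply pow_le_pow_left₀ (by nlinarith [Real.exp_pos (-t), Real.add_one_le_exp (-t)]) hb
    have hA : (Real.exp (-t)) ^ (-(n * p - ε * n)) = Real.exp ((n * p - ε * n) * t) := by
      rw [Real.rpow_def_of_pos (Real.exp_pos _), Real.log_exp]
      ring_nf
    calc (Real.exp (-t)) ^ (-(n * p - ε * n)) * (Real.exp (-t) * p + (1 - p)) ^ n
        ≤ Real.exp ((n * p - ε * n) * t) * Real.exp (-(p * t) + (3/4) * t ^ 2) ^ n := by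
          rw [hA]
          exact mul_le_mul_of_nonneg_left hbn (Real.exp_pos _).le
      _ = Real.exp ((n * p - ε * n) * t + n * (-(p * t) + (3/4) * t ^ 2)) := by
          rw [← Real.exp_nat_mul, ← Real.exp_add]
      _ ≤ Real.exp (n * (-(ε ^ 2 / 4))) := by
          apply Real.exp_le_exp.2
          have hnn : (0:ℝ) ≤ (n:ℝ) := Nat.cast_nonneg n
          rw [htdef]
          ring_nf
          nlinarith [mul_nonneg hnn (sq_nonneg ε)]
      _ = Real.exp (-(ε ^ 2 / 4)) ^ n := Real.exp_nat_mul _ n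
  -- combine
  have hsub : ∑ k ∈ badF p ε n, mdy p n k
      ≤ ∑ k ∈ (Finset.range (2 ^ n)).filter (fun k => n * p + ε * n < (wdy n k : ℝ)), mdy p n k
      + ∑ k ∈ (Finset.range (2 ^ n)).filter (fun k => (wdy n k : ℝ) < n * p - ε * n), mdy p n k := by
    have hUL : badF p ε n ⊆
        ((Finset.range (2 ^ n)).filter (fun k => n * p + ε * n < (wdy n k : ℝ)))
        ∪ ((Finset.range (2 ^ n)).filter (fun k => (wdy n k : ℝ) < n * p - ε * n)) := by
      intro k hk
      unfold badF at hk
      rw [Finset.mem_filter] at hk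
      rw [Finset.mem_union, Finset.mem_filter, Finset.mem_filter]
      rcases lt_abs.mp hk.2 with h | h
      · exact Or.inl ⟨hk.1, by linarith⟩
      · exact Or.inr ⟨hk.1, by linarith⟩
    set U := (Finset.range (2 ^ n)).filter (fun k => n * p + ε * n < (wdy n k : ℝ))
    set L := (Finset.range (2 ^ n)).filter (fun k => (wdy n k : ℝ) < n * p - ε * n)
    have h1 : ∑ k ∈ badF p ε n, mdy p n k ≤ ∑ k ∈ U ∪ L, mdy p n k :=
      Finset.sum_le_sum_of_subset_of_nonneg hUL (fun k _ _ => mdy_nonneg hp0 hp1 n k)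
    have h2 : ∑ k ∈ U ∪ L, mdy p n k + ∑ k ∈ U ∩ L, mdy p n k
        = ∑ k ∈ U, mdy p n k + ∑ k ∈ L, mdy p n k := Finset.sum_union_inter
    have h3 : 0 ≤ ∑ k ∈ U ∩ L, mdy p n k :=
      Finset.sum_nonneg (fun k _ => mdy_nonneg hp0 hp1 n k)
    linarith
  linarith
end tails
end HeavyAux

namespace HeavyAux
section bc
variable {p ε : ℝ} (hp0 : 0 < p) (hp1 : p < 1) (hε0 : 0 < ε) (hε1 : ε ≤ 1)

/-- bad set at level `n`: reals in `[0,1)` whose level-`n` weight deviates. -/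
def Badset (p ε : ℝ) (n : ℕ) : Set ℝ :=
  ⋃ k ∈ badF p ε n, Ico ((k:ℝ)/2^n) (((k:ℝ)+1)/2^n)

include hp0 hp1 hε0 hε1

lemma bmu_Badset_le (n : ℕ) :
    bmu p hp0 hp1 (Badset p ε n) ≤ ENNReal.ofReal (2 * Real.exp (-(ε^2/4)) ^ n) := by
  calc bmu p hp0 hp1 (Badset p ε n)
      ≤ ∑ k ∈ badF p ε n, bmu p hp0 hp1 (Ico ((k:ℝ)/2^n) (((k:ℝ)+1)/2^n)) :=
        measure_biUnion_finset_le _ _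
    _ = ∑ k ∈ badF p ε n, ENNReal.ofReal (mdy p n k) := by
        refine Finset.sum_congr rfl (fun k hk => ?_)
        have hk2 : k < 2 ^ n := by
          have := Finset.filter_subset (fun k => ε * n < |(wdy n k : ℝ) - n * p|)
            (Finset.range (2 ^ n)) hk
          exact Finset.mem_range.1 this
        exact bmu_cyl hp0 hp1 hk2
    _ = ENNReal.ofReal (∑ k ∈ badF p ε n, mdy p n k) := by
        exact (ENNReal.ofReal_sum_of_nonneg (fun k _ => mdy_nonneg hp0 hp1 n k)).symm
    _ ≤ ENNReal.ofReal (2 * Real.exp (-(ε^2/4)) ^ n) :=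
        ENNReal.ofReal_le_ofReal (bad_sum_le hp0 hp1 hε0 hε1 n)

lemma bmu_limsup_Badset : bmu p hp0 hp1 (Filter.limsup (Badset p ε) atTop) = 0 := by
  apply measure_limsup_atTop_eq_zero
  have hr0 : (0:ℝ) ≤ Real.exp (-(ε^2/4)) := (Real.exp_pos _).le
  have hr1 : Real.exp (-(ε^2/4)) < 1 := by
    rw [Real.exp_lt_one_iff]
    nlinarith
  have hsummable : Summable (fun n : ℕ => 2 * Real.exp (-(ε^2/4)) ^ n) :=
    (summable_geometric_of_lt_one hr0 hr1).mul_left 2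
  have hnonneg : ∀ n : ℕ, 0 ≤ 2 * Real.exp (-(ε^2/4)) ^ n := fun n => by positivity
  have hsum : ∑' n : ℕ, ENNReal.ofReal (2 * Real.exp (-(ε^2/4)) ^ n) ≠ ⊤ := by
    rw [← ENNReal.ofReal_tsum_of_nonneg hnonneg hsummable]
    exact ENNReal.ofReal_ne_top
  exact ne_top_of_le_ne_top hsum (ENNReal.tsum_le_tsum (fun n => bmu_Badset_le hp0 hp1 hε0 hε1 n))

/-- good set: weight controlled from level `N` on. -/
def GoodN (p ε : ℝ) (N : ℕ) : Set ℝ :=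
  {x | x ∈ Ico (0:ℝ) 1 ∧ ∀ n, N ≤ n → |(wdy n (kf x n) : ℝ) - n * p| ≤ ε * n}

omit hp0 hp1 hε0 hε1

lemma notbad_good {x : ℝ} {n : ℕ} (hx : x ∈ Ico (0:ℝ) 1) (hnb : x ∉ Badset p ε n) :
    |(wdy n (kf x n) : ℝ) - n * p| ≤ ε * n := by
  by_contra hcon
  push_neg at hcon
  apply hnb
  have hk2 : kf x n < 2 ^ n := kf_lt_pow hx.1 hx.2 n
  have hmem : kf x n ∈ badF p ε n := by
    unfold badF
    rw [Finset.mem_filter]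
    exact ⟨Finset.mem_range.2 hk2, hcon⟩
  refine Set.mem_biUnion hmem ⟨kf_le hx.1 n, ?_⟩
  exact lt_kf_add_one hx.1 n

include hp0 hp1 hε0 hε1

lemma exists_goodN : ∃ N : ℕ, bmu p hp0 hp1 (GoodN p ε N) ≠ 0 := by
  by_contra hcon
  push_neg at hcon
  have hsub : Ico (0:ℝ) 1 \ Filter.limsup (Badset p ε) atTop ⊆ ⋃ N, GoodN p ε N := by
    intro x hx
    have hx1 := hx.1
    have hx2 := hx.2
    rw [limsup_eq_iInf_iSup_of_nat] at hx2
    simp only [Set.iInf_eq_iInter, Set.mem_iInter, Set.iSup_eq_iUnion, Set.mem_iUnion,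
      not_forall, not_exists] at hx2
    obtain ⟨N, hN⟩ := hx2
    refine Set.mem_iUnion.2 ⟨N, hx1, fun n hn => notbad_good hx1 ?_⟩
    exact hN n hn
  have h1 : bmu p hp0 hp1 (Ico (0:ℝ) 1 \ Filter.limsup (Badset p ε) atTop) = 1 := by
    rw [measure_diff_null (bmu_limsup_Badset hp0 hp1 hε0 hε1), bmu_Ico01]
  have h2 : bmu p hp0 hp1 (⋃ N, GoodN p ε N) ≤ ∑' N : ℕ, bmu p hp0 hp1 (GoodN p ε N) :=
    measure_iUnion_le _
  simp only [hcon, tsum_zero] at h2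
  have h3 : bmu p hp0 hp1 (Ico (0:ℝ) 1 \ Filter.limsup (Badset p ε) atTop)
      ≤ bmu p hp0 hp1 (⋃ N, GoodN p ε N) := measure_mono hsub
  rw [h1] at h3
  have := le_trans h3 h2
  simp at this

end bc
end HeavyAux

namespace HeavyAux
section mdp

open EMetric in
/-- Mass distribution principle via dyadic intervals. -/
lemma mdp (μ : Measure ℝ) (s : Set ℝ) (hs : s ⊆ Ico 0 1) {d : ℝ≥0} (hd : 0 < d) (N : ℕ)
    (hcyl : ∀ x ∈ s, ∀ n : ℕ, N ≤ n →
      μ (Ico ((kf x n : ℝ) / 2 ^ n) (((kf x n : ℝ) + 1) / 2 ^ n))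
        ≤ ENNReal.ofReal ((2:ℝ) ^ (-(d:ℝ) * n)))
    (hμ : μ s ≠ 0) : (d : ℝ≥0∞) ≤ dimH s := by
  classical
  -- first: points of s are null
  have hsing : ∀ x ∈ s, μ {x} = 0 := by
    intro x hx
    have hx0 : (0:ℝ) ≤ x := (hs hx).1
    have hb : ∀ r : ℕ, μ {x} ≤ ENNReal.ofReal ((2:ℝ) ^ (-(d:ℝ) * (N + r : ℕ))) := by
      intro r
      refine le_trans (measure_mono ?_) (hcyl x hx (N + r) (Nat.le_add_right N r))
      rw [Set.singleton_subset_iff]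
      exact ⟨kf_le hx0 _, lt_kf_add_one hx0 _⟩
    have hb1 : (0:ℝ) ≤ (2:ℝ) ^ (-(d:ℝ)) := Real.rpow_nonneg (by norm_num) _
    have hb2 : (2:ℝ) ^ (-(d:ℝ)) < 1 :=
      Real.rpow_lt_one_of_one_lt_of_neg (by norm_num) (by exact_mod_cast neg_neg_iff_pos.2 hd)
    have heq : ∀ r : ℕ, (2:ℝ) ^ (-(d:ℝ) * (N + r : ℕ)) = ((2:ℝ) ^ (-(d:ℝ))) ^ (N + r) := by
      intro r
      rw [← Real.rpow_natCast ((2:ℝ) ^ (-(d:ℝ))) (N + r), ← Real.rpow_mul (by norm_num)]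
    have htend : Tendsto (fun r : ℕ => ENNReal.ofReal ((2:ℝ) ^ (-(d:ℝ) * (N + r : ℕ)))) atTop
        (𝓝 (ENNReal.ofReal 0)) := by
      apply ENNReal.tendsto_ofReal
      have h1 : Tendsto (fun m : ℕ => ((2:ℝ) ^ (-(d:ℝ))) ^ m) atTop (𝓝 0) :=
        tendsto_pow_atTop_nhds_zero_of_lt_one hb1 hb2
      have h2 : Tendsto (fun r : ℕ => N + r) atTop atTop :=
        tendsto_atTop_mono (fun r => Nat.le_add_left r N) tendsto_id
      exact Tendsto.congr (fun r => (heq r).symm) (h1.comp h2)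
    rw [ENNReal.ofReal_zero] at htend
    have := ge_of_tendsto htend (Filter.Eventually.of_forall hb)
    exact le_antisymm this (zero_le)
  -- the constant
  set C : ℝ≥0∞ := 3 * ENNReal.ofReal ((2:ℝ) ^ (d:ℝ)) with hCdef
  have hC0 : C ≠ 0 := by
    simp only [hCdef, ne_eq, mul_eq_zero, ENNReal.ofReal_eq_zero, not_or, not_le]
    exact ⟨by norm_num, Real.rpow_pos_of_pos (by norm_num) _⟩
  have hCtop : C ≠ ⊤ := by
    simp [hCdef, ENNReal.mul_eq_top]
  -- show hausdorff measure positive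
  apply le_dimH_of_hausdorffMeasure_ne_zero (d := d)
  have hmain : μ s / C ≤ μH[(d:ℝ)] s := by
    rw [Measure.hausdorffMeasure_apply]
    have hr₀pos : (0:ℝ≥0∞) < ENNReal.ofReal (1 / 2 ^ (N + 2)) := by
      rw [ENNReal.ofReal_pos]; positivity
    refine le_trans ?_ (le_iSup₂ (f := fun r _ => _) (ENNReal.ofReal (1 / 2 ^ (N + 2))) hr₀pos)
    refine le_iInf fun t => le_iInf fun hcov => le_iInf fun hdiam => ?_
    -- main estimate
    have claimA : ∀ n : ℕ, μ (t n ∩ s)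
        ≤ C * (⨆ _ : (t n).Nonempty, EMetric.diam (t n) ^ (d:ℝ)) := by
      intro n
      rcases Set.eq_empty_or_nonempty (t n ∩ s) with hne | hne
      · rw [hne, measure_empty]; exact zero_le
      obtain ⟨x, hxt, hxs⟩ := hne
      have htn : (t n).Nonempty := ⟨x, hxt⟩
      rw [iSup_pos htn]
      set D := EMetric.diam (t n) with hDdef
      have hDtop : D ≠ ⊤ := by
        refine ne_top_of_le_ne_top ?_ (hdiam n)
        exact ENNReal.ofReal_ne_top
      rcases eq_or_ne D 0 with hD0 | hD0
      · -- subsingleton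
        have hss : (t n).Subsingleton := EMetric.diam_eq_zero_iff.1 hD0
        have h1 : t n ∩ s ⊆ {x} := fun y hy => hss hy.1 hxt
        calc μ (t n ∩ s) ≤ μ {x} := measure_mono h1
          _ = 0 := hsing x hxs
          _ ≤ _ := zero_le
      · -- positive diameter
        have hrr0 : 0 < D.toReal := ENNReal.toReal_pos hD0 hDtop
        set rr := D.toReal with hrrdef
        have hrrle : rr ≤ 1 / 2 ^ (N + 2) := by
          have h1 := ENNReal.toReal_mono ENNReal.ofReal_ne_top (hdiam n)
          rwa [ENNReal.toReal_ofReal (by positivity)] at h1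
        -- choose the level m
        set m : ℕ := (-(Int.log 2 rr) - 1).toNat with hmdef
        have hlog1 : (2:ℝ) ^ (Int.log 2 rr) ≤ rr := Int.zpow_log_le_self (by norm_num) hrr0
        have hlog2 : rr < (2:ℝ) ^ (Int.log 2 rr + 1) := Int.lt_zpow_succ_log_self (by norm_num) rr
        have hloghi : Int.log 2 rr ≤ -(N + 2 : ℕ) := by
          have h1 : Int.log 2 rr ≤ Int.log 2 ((1:ℝ) / 2 ^ (N + 2)) :=
            Int.log_mono_right hrr0 hrrle
          have h2 : ((1:ℝ) / 2 ^ (N + 2)) = ((2:ℕ):ℝ) ^ (-(N + 2 : ℕ) : ℤ) := by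
            rw [zpow_neg, zpow_natCast]
            norm_num
          rw [h2, Int.log_zpow (by norm_num : 1 < 2)] at h1
          exact h1
        have hmZ : (m : ℤ) = -(Int.log 2 rr) - 1 := by
          rw [hmdef]
          rw [Int.toNat_of_nonneg (by omega)]
        have hmN : N ≤ m := by omega
        have h2m : ((1:ℝ) / 2 ^ m) = (2:ℝ) ^ (Int.log 2 rr + 1) := by
          have : (Int.log 2 rr + 1 : ℤ) = -(m : ℤ) := by omega
          rw [this, zpow_neg, zpow_natCast]
          field_simp
        have hup : rr < 1 / 2 ^ m := by rw [h2m]; exact hlog2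
        have hdn : (1:ℝ) / 2 ^ m ≤ 2 * rr := by
          rw [h2m, zpow_add₀ (by norm_num : (2:ℝ) ≠ 0), zpow_one]
          nlinarith [hlog1]
        -- the three dyadic intervals
        set κ := kf x m with hκdef
        have hx0 : (0:ℝ) ≤ x := (hs hxs).1
        have hnear : ∀ y ∈ t n ∩ s, kf y m + 1 ≥ κ ∧ kf y m ≤ κ + 1 := by
          intro y hy
          have hy0 : (0:ℝ) ≤ y := (hs hy.2).1
          have hed : edist y x ≤ D := EMetric.edist_le_diam_of_mem hy.1 hxt
          have hdist : |y - x| ≤ rr := by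
            have h1 : edist y x ≠ ⊤ := ne_top_of_le_ne_top hDtop hed
            have h2 := (ENNReal.toReal_le_toReal h1 hDtop).2 hed
            rwa [edist_dist, ENNReal.toReal_ofReal dist_nonneg, Real.dist_eq] at h2
          have hfl : |y * 2 ^ m - x * 2 ^ m| < 1 := by
            have h3 : |y - x| * 2 ^ m < 1 := by
              have h4 : (0:ℝ) < 2 ^ m := by positivity
              have h5 : |y - x| * 2 ^ m ≤ rr * 2 ^ m := by nlinarith [abs_nonneg (y - x)]
              have h6 : rr * 2 ^ m < 1 := by
                rw [div_eq_mul_inv, one_mul] at hup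
                calc rr * 2 ^ m < ((2:ℝ) ^ m)⁻¹ * 2 ^ m := by nlinarith
                  _ = 1 := by field_simp
              linarith
            calc |y * 2 ^ m - x * 2 ^ m| = |y - x| * 2 ^ m := by
                  rw [← sub_mul, abs_mul, abs_of_nonneg (by positivity : (0:ℝ) ≤ (2:ℝ) ^ m)]
              _ < 1 := h3
          rw [abs_lt] at hfl
          have hf1 : ⌊y * 2 ^ m⌋ ≤ ⌊x * 2 ^ m⌋ + 1 := by
            have : ⌊y * 2 ^ m⌋ ≤ ⌊x * 2 ^ m + 1⌋ := Int.floor_le_floor (by linarith)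
            rwa [Int.floor_add_one] at this
          have hf2 : ⌊x * 2 ^ m⌋ ≤ ⌊y * 2 ^ m⌋ + 1 := by
            have : ⌊x * 2 ^ m⌋ ≤ ⌊y * 2 ^ m + 1⌋ := Int.floor_le_floor (by linarith)
            rwa [Int.floor_add_one] at this
          have hy1 : (0:ℤ) ≤ ⌊y * 2 ^ m⌋ := Int.floor_nonneg.2 (by positivity)
          have hx1 : (0:ℤ) ≤ ⌊x * 2 ^ m⌋ := Int.floor_nonneg.2 (by positivity)
          constructor
          · unfold kf; rw [hκdef]; unfold kf; omega
          · unfold kf; rw [hκdef]; unfold kf; omega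
        set F : Finset ℕ := {κ - 1, κ, κ + 1} with hFdef
        have hsubcover : t n ∩ s ⊆ ⋃ j ∈ F, (Ico ((j:ℝ) / 2 ^ m) (((j:ℝ) + 1) / 2 ^ m) ∩ s) := by
          intro y hy
          have hy0 : (0:ℝ) ≤ y := (hs hy.2).1
          have hj := hnear y hy
          refine Set.mem_biUnion (show kf y m ∈ F by
            rw [hFdef]
            simp only [Finset.mem_insert, Finset.mem_singleton]
            omega) ?_
          exact ⟨⟨kf_le hy0 m, lt_kf_add_one hy0 m⟩, hy.2⟩
        have hpiece : ∀ j : ℕ, μ (Ico ((j:ℝ) / 2 ^ m) (((j:ℝ) + 1) / 2 ^ m) ∩ s)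
            ≤ ENNReal.ofReal ((2:ℝ) ^ (-(d:ℝ) * m)) := by
          intro j
          rcases Set.eq_empty_or_nonempty (Ico ((j:ℝ) / 2 ^ m) (((j:ℝ) + 1) / 2 ^ m) ∩ s)
            with he | ⟨y, hyI, hys⟩
          · rw [he, measure_empty]; exact zero_le
          · have hkfy : kf y m = j := kf_eq_of_mem hyI
            refine le_trans (measure_mono Set.inter_subset_left) ?_
            have := hcyl y hys m hmN
            rwa [hkfy] at this
        have hsum : μ (t n ∩ s) ≤ 3 * ENNReal.ofReal ((2:ℝ) ^ (-(d:ℝ) * m)) := by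
          calc μ (t n ∩ s) ≤ μ (⋃ j ∈ F, (Ico ((j:ℝ) / 2 ^ m) (((j:ℝ) + 1) / 2 ^ m) ∩ s)) :=
                measure_mono hsubcover
            _ ≤ ∑ j ∈ F, μ (Ico ((j:ℝ) / 2 ^ m) (((j:ℝ) + 1) / 2 ^ m) ∩ s) :=
                measure_biUnion_finset_le F _
            _ ≤ ∑ _j ∈ F, ENNReal.ofReal ((2:ℝ) ^ (-(d:ℝ) * m)) :=
                Finset.sum_le_sum (fun j _ => hpiece j)
            _ = F.card * ENNReal.ofReal ((2:ℝ) ^ (-(d:ℝ) * m)) := by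
                rw [Finset.sum_const, nsmul_eq_mul]
            _ ≤ 3 * ENNReal.ofReal ((2:ℝ) ^ (-(d:ℝ) * m)) := by
                apply mul_le_mul_left
                have hcard : F.card ≤ 3 := by
                  rw [hFdef]
                  apply le_trans (Finset.card_insert_le _ _)
                  apply Nat.succ_le_succ
                  apply le_trans (Finset.card_insert_le _ _)
                  simp
                exact_mod_cast Nat.cast_le.2 hcard
        -- relate to D^d
        have hDd : ENNReal.ofReal ((2:ℝ) ^ (-(d:ℝ) * m)) ≤ ENNReal.ofReal ((2:ℝ) ^ (d:ℝ)) * D ^ (d:ℝ) := by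
          have h1 : ((1:ℝ) / 2 ^ m) ^ (d:ℝ) = (2:ℝ) ^ (-(d:ℝ) * (m:ℝ)) := by
            rw [one_div, ← Real.rpow_natCast (2:ℝ) m,
              ← Real.rpow_neg (by norm_num : (0:ℝ) ≤ 2),
              ← Real.rpow_mul (by norm_num : (0:ℝ) ≤ 2)]
            congr 1
            ring
          have h2 : ((1:ℝ) / 2 ^ m) ^ (d:ℝ) ≤ (2 * rr) ^ (d:ℝ) :=
            Real.rpow_le_rpow (by positivity) hdn d.coe_nonneg
          have h3 : ((2:ℝ) * rr) ^ (d:ℝ) = (2:ℝ) ^ (d:ℝ) * rr ^ (d:ℝ) :=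
            Real.mul_rpow (by norm_num) hrr0.le
          have h4 : ENNReal.ofReal (rr ^ (d:ℝ)) = D ^ (d:ℝ) := by
            rw [← ENNReal.ofReal_rpow_of_pos hrr0, hrrdef, ENNReal.ofReal_toReal hDtop]
          calc ENNReal.ofReal ((2:ℝ) ^ (-(d:ℝ) * m)) ≤ ENNReal.ofReal ((2:ℝ) ^ (d:ℝ) * rr ^ (d:ℝ)) := by
                apply ENNReal.ofReal_le_ofReal
                rw [← h1, ← h3]
                exact h2
            _ = ENNReal.ofReal ((2:ℝ) ^ (d:ℝ)) * ENNReal.ofReal (rr ^ (d:ℝ)) :=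
                ENNReal.ofReal_mul (by positivity)
            _ = ENNReal.ofReal ((2:ℝ) ^ (d:ℝ)) * D ^ (d:ℝ) := by rw [h4]
        calc μ (t n ∩ s) ≤ 3 * ENNReal.ofReal ((2:ℝ) ^ (-(d:ℝ) * m)) := hsum
          _ ≤ 3 * (ENNReal.ofReal ((2:ℝ) ^ (d:ℝ)) * D ^ (d:ℝ)) := mul_le_mul_right hDd 3
          _ = C * D ^ (d:ℝ) := by rw [hCdef, mul_assoc]
    -- sum up
    have hcov2 : s ⊆ ⋃ n, (t n ∩ s) := by
      intro y hy
      obtain ⟨n, hn⟩ := Set.mem_iUnion.1 (hcov hy)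
      exact Set.mem_iUnion.2 ⟨n, hn, hy⟩
    have h5 : μ s ≤ ∑' n, μ (t n ∩ s) :=
      le_trans (measure_mono hcov2) (measure_iUnion_le _)
    have h6 : μ s ≤ C * ∑' n, (⨆ _ : (t n).Nonempty, EMetric.diam (t n) ^ (d:ℝ)) := by
      rw [← ENNReal.tsum_mul_left]
      exact le_trans h5 (ENNReal.tsum_le_tsum claimA)
    exact ENNReal.div_le_of_le_mul' h6
  intro hH0
  rw [hH0] at hmain
  have : μ s / C = 0 := le_antisymm hmain (zero_le)
  rw [ENNReal.div_eq_zero_iff] at this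
  rcases this with h | h
  · exact hμ h
  · exact hCtop h

end mdp
end HeavyAux

namespace HeavyAux
section final

/-- natural-log binary entropy. -/
def HH (q : ℝ) : ℝ := -(q * Real.log q) - (1 - q) * Real.log (1 - q)

lemma mdy_le_target {p ε d' : ℝ} (hp0 : 0 < p) (hp1 : p < 1)
    (hd : d' * Real.log 2 ≤ HH p - ε * |Real.log p - Real.log (1 - p)|)
    {n w : ℕ} (hwn : w ≤ n) (hw : |(w:ℝ) - n * p| ≤ ε * n) :
    p ^ w * (1 - p) ^ (n - w) ≤ (2:ℝ) ^ (-(d') * (n:ℝ)) := by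
  have h1p : 0 < 1 - p := by linarith
  set a := Real.log p with hadef
  set b := Real.log (1 - p) with hbdef
  have hlhs : p ^ w * (1 - p) ^ (n - w) = Real.exp ((w:ℝ) * a + ((n:ℝ) - (w:ℝ)) * b) := by
    have hcast : (((n - w : ℕ)):ℝ) = (n:ℝ) - (w:ℝ) := by
      push_cast [Nat.cast_sub hwn]; ring
    rw [← Real.exp_log (show (0:ℝ) < p ^ w * (1-p) ^ (n-w) by positivity),
      Real.log_mul (by positivity) (by positivity), Real.log_pow, Real.log_pow, hcast]
  have hrhs : (2:ℝ) ^ (-(d') * (n:ℝ)) = Real.exp (Real.log 2 * (-(d') * n)) := by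
    rw [Real.rpow_def_of_pos (by norm_num)]
  rw [hlhs, hrhs]
  apply Real.exp_le_exp.2
  -- linear estimate
  have hident : (w:ℝ) * a + ((n:ℝ) - (w:ℝ)) * b
      = (n:ℝ) * (p * a + (1 - p) * b) + ((w:ℝ) - (n:ℝ) * p) * (a - b) := by ring
  have habs : ((w:ℝ) - (n:ℝ) * p) * (a - b) ≤ (ε * n) * |a - b| := by
    calc ((w:ℝ) - (n:ℝ) * p) * (a - b) ≤ |((w:ℝ) - (n:ℝ) * p) * (a - b)| := le_abs_self _
      _ = |(w:ℝ) - (n:ℝ) * p| * |a - b| := abs_mul _ _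
      _ ≤ (ε * n) * |a - b| := mul_le_mul_of_nonneg_right hw (abs_nonneg _)
  have hHH : p * a + (1 - p) * b = -HH p := by rw [HH, hadef, hbdef]; ring
  have hn0 : (0:ℝ) ≤ (n:ℝ) := Nat.cast_nonneg n
  have hscale : (n:ℝ) * (d' * Real.log 2) ≤ (n:ℝ) * (HH p - ε * |a - b|) :=
    mul_le_mul_of_nonneg_left hd hn0
  rw [hident, hHH]
  nlinarith [habs, hscale]

lemma key {ρ p d' : ℝ} (hρ0 : 0 ≤ ρ) (hρp : ρ < p) (hp1 : p < 1) (hd'0 : 0 < d')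
    (hdh : d' * Real.log 2 < HH p) : ENNReal.ofReal d' ≤ dimH (Hset ρ) := by
  have hp0 : 0 < p := lt_of_le_of_lt hρ0 hρp
  set L := |Real.log p - Real.log (1 - p)| with hLdef
  have hL0 : 0 ≤ L := abs_nonneg _
  set ε := min (min (p - ρ) 1) ((HH p - d' * Real.log 2) / (1 + L)) with hεdef
  have hε0 : 0 < ε := by
    apply lt_min (lt_min (by linarith) one_pos)
    apply div_pos (by linarith) (by linarith)
  have hε1 : ε ≤ 1 := le_trans (min_le_left _ _) (min_le_right _ _)
  have hερ : ε ≤ p - ρ := le_trans (min_le_left _ _) (min_le_left _ _)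
  have hεL : ε * L ≤ HH p - d' * Real.log 2 := by
    have h1 : ε ≤ (HH p - d' * Real.log 2) / (1 + L) := min_le_right _ _
    have h2 : ε * (1 + L) ≤ HH p - d' * Real.log 2 := by
      rw [← le_div_iff₀ (by linarith : (0:ℝ) < 1 + L)]
      exact h1
    nlinarith
  have hd : d' * Real.log 2 ≤ HH p - ε * L := by linarith
  obtain ⟨N, hN⟩ := exists_goodN hp0 hp1 hε0 hε1
  -- GoodN ⊆ Hset ρ
  have hsub : GoodN p ε N ⊆ Hset ρ := by
    intro x hx
    obtain ⟨hxI, hxw⟩ := hx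
    refine ⟨dg x, fBin_dg hxI.1 hxI.2, ?_⟩
    unfold Heavy
    rw [Filter.liminf_eq]
    apply le_sSup
    show ∀ᶠ n in atTop, (0 : EReal) ≤ (((wPre (dg x) n : ℝ) - n * ρ : ℝ) : EReal)
    filter_upwards [Filter.eventually_ge_atTop N] with n hn
    rw [EReal.coe_nonneg]
    have hww := hxw n hn
    rw [abs_le] at hww
    rw [wPre_dg hxI.1]
    have hn0 : (0:ℝ) ≤ (n:ℝ) := Nat.cast_nonneg n
    nlinarith [hww.1]
  -- dimH lower bound via mdp
  have hdnn : (0:ℝ≥0) < d'.toNNReal := Real.toNNReal_pos.2 hd'0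
  have hcoe : ((d'.toNNReal : ℝ≥0) : ℝ) = d' := Real.coe_toNNReal d' hd'0.le
  have hdim : ((d'.toNNReal : ℝ≥0) : ℝ≥0∞) ≤ dimH (GoodN p ε N) := by
    apply mdp (bmu p hp0 hp1) (GoodN p ε N) (fun x hx => hx.1) hdnn N ?_ hN
    intro x hx n hn
    have hk2 : kf x n < 2 ^ n := kf_lt_pow hx.1.1 hx.1.2 n
    rw [bmu_cyl hp0 hp1 hk2]
    apply ENNReal.ofReal_le_ofReal
    rw [mdy_eq_pow hp0 hp1, hcoe]
    exact mdy_le_target hp0 hp1 hd (wdy_le hp0 hp1 n (kf x n)) (hx.2 n hn)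
  calc ENNReal.ofReal d' = ((d'.toNNReal : ℝ≥0) : ℝ≥0∞) := rfl
    _ ≤ dimH (GoodN p ε N) := hdim
    _ ≤ dimH (Hset ρ) := dimH_mono hsub

lemma HH_contAt {c : ℝ} (hc0 : 0 < c) (hc1 : c < 1) : ContinuousAt HH c := by
  have h1 : ContinuousAt (fun q : ℝ => q * Real.log q) c :=
    continuousAt_id.mul (Real.continuousAt_log hc0.ne')
  have h2 : ContinuousAt (fun q : ℝ => (1 - q) * Real.log (1 - q)) c := by
    have h3 : ContinuousAt (fun q : ℝ => 1 - q) c := (continuous_const.sub continuous_id).continuousAt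
    have h4 : ContinuousAt (fun q : ℝ => Real.log (1 - q)) c :=
      (Real.continuousAt_log (by linarith : 1 - c ≠ 0)).comp h3
    exact h3.mul h4
  exact (h1.neg).sub h2

lemma HH_half : HH (1/2) = Real.log 2 := by
  unfold HH
  rw [show (1:ℝ) - 1/2 = 1/2 by norm_num, show (1:ℝ)/2 = 2⁻¹ by norm_num, Real.log_inv]
  ring

/-- helper: reduce `ofReal B ≤ A` to approximations. -/
lemma ofReal_le_of_forall_lt {A : ℝ≥0∞} {B : ℝ}
    (h : ∀ c : ℝ, 0 < c → c < B → ENNReal.ofReal c ≤ A) : ENNReal.ofReal B ≤ A := by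
  rcases le_or_gt B 0 with hB | hB
  · rw [ENNReal.ofReal_eq_zero.2 hB]
    exact zero_le
  · have hdiv : Tendsto (fun n : ℕ => B / ((n:ℝ) + 2)) atTop (𝓝 0) := by
      have h1 : Tendsto (fun n : ℕ => B / ((n + 2 : ℕ) : ℝ)) atTop (𝓝 0) :=
        (tendsto_const_div_atTop_nhds_zero_nat B).comp (tendsto_add_atTop_nat 2)
      apply h1.congr
      intro n
      push_cast
      ring
    have htend : Tendsto (fun n : ℕ => ENNReal.ofReal (B - B / ((n:ℝ) + 2))) atTop
        (𝓝 (ENNReal.ofReal (B - 0))) :=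
      ENNReal.tendsto_ofReal (tendsto_const_nhds.sub hdiv)
    rw [sub_zero] at htend
    apply le_of_tendsto htend
    apply Filter.Eventually.of_forall
    intro n
    have hn2 : (0:ℝ) < (n:ℝ) + 2 := by positivity
    have hlt : B / ((n:ℝ) + 2) ≤ B / 2 := by
      apply div_le_div_of_nonneg_left hB.le (by norm_num)
      linarith [Nat.cast_nonneg (α := ℝ) n]
    have hpos : 0 < B - B / ((n:ℝ) + 2) := by
      have : B / 2 < B := by linarith
      linarith
    have hltB : B - B / ((n:ℝ) + 2) < B := by
      have : 0 < B / ((n:ℝ) + 2) := by positivity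
      linarith
    exact h _ hpos hltB

end final
end HeavyAux

open HeavyAux in
/-- `dim_H H(ρ) = 1` for `ρ ∈ [0,1/2]` and `dim_H H(ρ) ≥ h₂(ρ)` for `ρ ∈ (1/2,1]`. -/
theorem heavy_dimH :
    (∀ ρ : ℝ, 0 ≤ ρ → ρ ≤ 1 / 2 → dimH (Hset ρ) = 1) ∧
    (∀ ρ : ℝ, 1 / 2 < ρ → ρ ≤ 1 →
      ENNReal.ofReal (-ρ * Real.logb 2 ρ - (1 - ρ) * Real.logb 2 (1 - ρ)) ≤ dimH (Hset ρ)) := by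
  have hlog2 : (0:ℝ) < Real.log 2 := Real.log_pos (by norm_num)
  constructor
  · intro ρ h0 h12
    apply le_antisymm
    · calc dimH (Hset ρ) ≤ dimH (univ : Set ℝ) := dimH_mono (subset_univ _)
        _ = 1 := Real.dimH_univ
    · rw [← ENNReal.ofReal_one]
      apply ofReal_le_of_forall_lt
      intro c hc0 hc1
      have hcont := HH_contAt (by norm_num : (0:ℝ) < 1/2) (by norm_num)
      have hlt : c * Real.log 2 < HH (1/2) := by
        rw [HH_half]
        nlinarith
      have hev : ∀ᶠ q in 𝓝 (1/2 : ℝ), c * Real.log 2 < HH q :=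
        hcont.tendsto.eventually_const_lt hlt
      have hev1 : ∀ᶠ q in 𝓝 (1/2 : ℝ), q < 1 := eventually_lt_nhds (by norm_num)
      have hall : ∀ᶠ q in 𝓝[>] (1/2:ℝ),
          (c * Real.log 2 < HH q ∧ q < 1) ∧ 1/2 < q :=
        ((hev.filter_mono nhdsWithin_le_nhds).and
          (hev1.filter_mono nhdsWithin_le_nhds)).and eventually_mem_nhdsWithin
      obtain ⟨p, ⟨hdh, hp1⟩, hhalf⟩ := hall.exists
      exact key h0 (lt_of_le_of_lt h12 hhalf) hp1 hc0 hdh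
  · intro ρ h12 h1
    rcases eq_or_lt_of_le h1 with h1' | h1'
    · subst h1'
      simp
    · have hρ0 : (0:ℝ) < ρ := lt_trans (by norm_num) h12
      have hexpr : -ρ * Real.logb 2 ρ - (1-ρ) * Real.logb 2 (1-ρ) = HH ρ / Real.log 2 := by
        unfold Real.logb HH
        field_simp
      rw [hexpr]
      apply ofReal_le_of_forall_lt
      intro c hc0 hc
      have hclt : c * Real.log 2 < HH ρ := (lt_div_iff₀ hlog2).1 hc
      have hcont := HH_contAt hρ0 h1'
      have hev : ∀ᶠ q in 𝓝 ρ, c * Real.log 2 < HH q :=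
        hcont.tendsto.eventually_const_lt hclt
      have hev1 : ∀ᶠ q in 𝓝 ρ, q < 1 := eventually_lt_nhds h1'
      have hall : ∀ᶠ q in 𝓝[>] ρ,
          (c * Real.log 2 < HH q ∧ q < 1) ∧ ρ < q :=
        ((hev.filter_mono nhdsWithin_le_nhds).and
          (hev1.filter_mono nhdsWithin_le_nhds)).and eventually_mem_nhdsWithin
      obtain ⟨p, ⟨hdh, hp1⟩, hρp⟩ := hall.exists
      exact key hρ0.le hρp hp1 hc0 hdh
end
end

section
/- Fix ρ ∈ [0,1] and for n ≥ 0 and k = 1,…,2^n set H_n(ρ,k) := H(ρ) ∩ [(k−1)2^{−n}, k·2^{−n}]. Then for all n and all k, H_n(ρ,k) = H_{n+1}(ρ,2k−1) ∪ H_{n+1}(ρ,2k), and H_n(ρ,k) is quasi self-similar: {2x − (k−1)2^{−n} : x ∈ H_{n+1}(ρ,2k−1)} ⊆ H_n(ρ,k) ⊆ {2x − k·2^{−n} : x ∈ H_{n+1}(ρ,2k)}. -/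
open Filter Set MeasureTheory

noncomputable section

/-- `H_n(ρ,k) = H(ρ) ∩ [(k-1)2^{-n}, k 2^{-n}]`. -/
def HnSet (ρ : ℝ) (n k : ℕ) : Set ℝ :=
  Hset ρ ∩ Set.Icc (((k : ℝ) - 1) / 2 ^ n) ((k : ℝ) / 2 ^ n)

namespace HQSS

def term (b : ℕ → Bool) (i : ℕ) : ℝ := (if b i then (1:ℝ) else 0) / 2 ^ (i+1)

lemma term_nonneg (b : ℕ → Bool) (i : ℕ) : 0 ≤ term b i := by
  unfold term; split <;> positivity

lemma term_le (b : ℕ → Bool) (i : ℕ) : term b i ≤ (1/2:ℝ)^(i+1) := by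
  unfold term
  rw [div_pow, one_pow]
  split
  · exact le_refl _
  · rw [zero_div]; positivity

lemma summable_term (b : ℕ → Bool) : Summable (term b) :=
  Summable.of_nonneg_of_le (term_nonneg b) (term_le b)
    (summable_geometric_two.comp_injective (add_left_injective 1))

def val (b : ℕ → Bool) (N : ℕ) : ℝ := ∑ i ∈ Finset.range N, term b i
def tail (b : ℕ → Bool) (N : ℕ) : ℝ := ∑' i, term b (i + N)

lemma fBin_eq (b : ℕ → Bool) (N : ℕ) : fBin b = val b N + tail b N :=
  (Summable.sum_add_tsum_nat_add N (summable_term b)).symm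

lemma summable_tail (b : ℕ → Bool) (N : ℕ) : Summable (fun i => term b (i + N)) :=
  (summable_nat_add_iff N).mpr (summable_term b)

lemma tail_nonneg (b : ℕ → Bool) (N : ℕ) : 0 ≤ tail b N :=
  tsum_nonneg (fun i => term_nonneg b _)

lemma summable_geom_shift (N : ℕ) : Summable (fun i : ℕ => ((1:ℝ)/2)^(i + N + 1)) := by
  simpa [Function.comp_def, add_assoc] using summable_geometric_two.comp_injective (add_left_injective (N+1))

lemma geom_tail (N : ℕ) : ∑' i : ℕ, ((1:ℝ)/2)^(i + N + 1) = (1/2:ℝ)^N := by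
  have h : ∀ i : ℕ, ((1:ℝ)/2)^(i + N + 1) = (1/2:ℝ)^(N+1) * ((1:ℝ)/2)^i := by
    intro i; rw [← pow_add]; ring_nf
  rw [tsum_congr h, tsum_mul_left, tsum_geometric_two]
  rw [pow_succ]
  ring

lemma tail_le (b : ℕ → Bool) (N : ℕ) : tail b N ≤ (1/2:ℝ)^N := by
  rw [← geom_tail N]
  exact Summable.tsum_le_tsum (fun i => term_le b _) (summable_tail b N) (summable_geom_shift N)

lemma tail_eq_zero (b : ℕ → Bool) (N : ℕ) (h : ∀ j, N ≤ j → b j = false) : tail b N = 0 := by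
  unfold tail
  have : ∀ i : ℕ, term b (i + N) = 0 := by
    intro i; unfold term; rw [h (i+N) (by omega)]; simp
  rw [tsum_congr this, tsum_zero]

lemma bits_false_of_tail_eq_zero (b : ℕ → Bool) (N : ℕ) (h : tail b N = 0) :
    ∀ j, N ≤ j → b j = false := by
  intro j hj
  by_contra hb
  have hb' : b j = true := by simpa using hb
  have h1 : term b ((j - N) + N) ≤ tail b N :=
    Summable.le_tsum (summable_tail b N) _ (fun i _ => term_nonneg b _)
  rw [h] at h1
  have : term b j ≤ 0 := by rwa [Nat.sub_add_cancel hj] at h1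
  unfold term at this
  rw [hb'] at this
  rw [if_pos rfl] at this
  have hp : (0:ℝ) < 1 / 2^(j+1) := by positivity
  linarith

lemma tail_eq_max (b : ℕ → Bool) (N : ℕ) (h : ∀ j, N ≤ j → b j = true) :
    tail b N = (1/2:ℝ)^N := by
  unfold tail
  have : ∀ i : ℕ, term b (i + N) = ((1:ℝ)/2)^(i + N + 1) := by
    intro i; unfold term; rw [h (i+N) (by omega), if_pos rfl, div_pow, one_pow]
  rw [tsum_congr this, geom_tail]

lemma bits_true_of_tail_eq_max (b : ℕ → Bool) (N : ℕ) (h : tail b N = (1/2:ℝ)^N) :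
    ∀ j, N ≤ j → b j = true := by
  intro j hj
  by_contra hb
  have hb' : b j = false := by simpa using hb
  set g : ℕ → ℝ := fun i => ((1:ℝ)/2)^(i + N + 1) - term b (i + N) with hg
  have hgs : Summable g := (summable_geom_shift N).sub (summable_tail b N)
  have hgnn : ∀ i, 0 ≤ g i := fun i => sub_nonneg.mpr (term_le b _)
  have hgt : ∑' i, g i = 0 := by
    rw [Summable.tsum_sub (summable_geom_shift N) (summable_tail b N), geom_tail]
    rw [show (∑' i, term b (i + N)) = tail b N from rfl, h, sub_self]
  have h1 : g (j - N) ≤ ∑' i, g i := Summable.le_tsum hgs _ (fun i _ => hgnn i)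
  rw [hgt] at h1
  have hjj : j - N + N = j := Nat.sub_add_cancel hj
  rw [hg] at h1
  simp only [hjj] at h1
  unfold term at h1
  rw [hb'] at h1
  norm_num at h1
  have hp : (0:ℝ) < (1/2:ℝ)^(j+1) := by positivity
  linarith

def natVal (b : ℕ → Bool) (N : ℕ) : ℕ := ∑ i ∈ Finset.range N, (if b i then 2^(N-1-i) else 0)

lemma natVal_succ (b : ℕ → Bool) (N : ℕ) :
    natVal b (N+1) = 2 * natVal b N + (if b N then 1 else 0) := by
  unfold natVal
  rw [Finset.sum_range_succ]
  congr 1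
  · rw [Finset.mul_sum]
    apply Finset.sum_congr rfl
    intro i hi
    have hi' : i < N := Finset.mem_range.mp hi
    have : N + 1 - 1 - i = (N - 1 - i) + 1 := by omega
    rw [this]
    split <;> ring
  · simp

lemma val_eq (b : ℕ → Bool) (N : ℕ) : val b N = (natVal b N : ℝ) / 2^N := by
  induction N with
  | zero => simp [val, natVal]
  | succ N ih =>
    rw [val, Finset.sum_range_succ, ← val, ih, natVal_succ]
    unfold term
    push_cast
    have h2 : (0:ℝ) < 2^N := by positivity
    field_simp
    split <;> ring

lemma natVal_lt (b : ℕ → Bool) (N : ℕ) : natVal b N < 2^N := by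
  induction N with
  | zero => simp [natVal]
  | succ N ih =>
    rw [natVal_succ]
    split <;> omega

lemma wPre_succ (b : ℕ → Bool) (N : ℕ) :
    wPre b (N+1) = wPre b N + (if b N then 1 else 0) := Finset.sum_range_succ _ N

lemma heavy_of_eventually {ρ : ℝ} {b : ℕ → Bool}
    (h : ∀ᶠ m in atTop, (0:ℝ) ≤ (wPre b m : ℝ) - m * ρ) : Heavy ρ b := by
  apply le_liminf_of_le (by isBoundedDefault)
  filter_upwards [h] with m hm
  exact_mod_cast EReal.coe_nonneg.mpr hm

lemma not_heavy_of_frequently {ρ : ℝ} {b : ℕ → Bool}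
    (h : ∃ᶠ m in atTop, (wPre b m : ℝ) - m * ρ ≤ -1) : ¬ Heavy ρ b := by
  intro hh
  have h2 : atTop.liminf (fun m : ℕ => (((wPre b m : ℝ) - m * ρ : ℝ) : EReal)) ≤ ((-1:ℝ) : EReal) :=
    liminf_le_of_frequently_le' (h.mono fun m hm => EReal.coe_le_coe_iff.mpr hm)
  have := le_trans hh h2
  have : (0:ℝ) ≤ -1 := by exact_mod_cast this
  linarith

lemma heavy_of_le_succ {ρ : ℝ} {b b' : ℕ → Bool} (hb : Heavy ρ b) (N : ℕ)
    (h : ∀ m, N ≤ m → (wPre b (m+1) : ℝ) - (m+1) * ρ ≤ (wPre b' m : ℝ) - m * ρ) :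
    Heavy ρ b' := by
  unfold Heavy at hb ⊢
  calc (0:EReal) ≤ atTop.liminf (fun m : ℕ => (((wPre b m : ℝ) - m * ρ : ℝ) : EReal)) := hb
    _ = atTop.liminf (fun m : ℕ => (((wPre b (m+1) : ℝ) - ((m+1 : ℕ) : ℝ) * ρ : ℝ) : EReal)) :=
        (liminf_nat_add (fun m : ℕ => (((wPre b m : ℝ) - m * ρ : ℝ) : EReal)) 1).symm
    _ ≤ atTop.liminf (fun m : ℕ => (((wPre b' m : ℝ) - m * ρ : ℝ) : EReal)) := by
        refine liminf_le_liminf ?_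
        filter_upwards [eventually_ge_atTop N] with m hm
        refine EReal.coe_le_coe_iff.mpr ?_
        have := h m hm
        push_cast
        push_cast at this
        linarith

lemma heavy_of_succ_le {ρ : ℝ} {b b' : ℕ → Bool} (hb : Heavy ρ b) (N : ℕ)
    (h : ∀ m, N ≤ m → (wPre b m : ℝ) - m * ρ ≤ (wPre b' (m+1) : ℝ) - (m+1) * ρ) :
    Heavy ρ b' := by
  unfold Heavy at hb ⊢
  calc (0:EReal) ≤ atTop.liminf (fun m : ℕ => (((wPre b m : ℝ) - m * ρ : ℝ) : EReal)) := hb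
    _ ≤ atTop.liminf (fun m : ℕ => (((wPre b' (m+1) : ℝ) - ((m+1 : ℕ) : ℝ) * ρ : ℝ) : EReal)) := by
        refine liminf_le_liminf ?_
        filter_upwards [eventually_ge_atTop N] with m hm
        refine EReal.coe_le_coe_iff.mpr ?_
        have := h m hm
        push_cast
        push_cast at this
        linarith
    _ = atTop.liminf (fun m : ℕ => (((wPre b' m : ℝ) - m * ρ : ℝ) : EReal)) :=
        liminf_nat_add (fun m : ℕ => (((wPre b' m : ℝ) - m * ρ : ℝ) : EReal)) 1

/-! ### deletion -/

def delBit (b : ℕ → Bool) (n : ℕ) : ℕ → Bool := fun i => if i < n then b i else b (i+1)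

lemma delBit_lt (b : ℕ → Bool) {n i : ℕ} (h : i < n) : delBit b n i = b i := by
  unfold delBit; rw [if_pos h]

lemma delBit_ge (b : ℕ → Bool) {n i : ℕ} (h : n ≤ i) : delBit b n i = b (i+1) := by
  unfold delBit; rw [if_neg (by omega)]

lemma fBin_delBit (b : ℕ → Bool) (n : ℕ) :
    fBin (delBit b n) = val b n + 2 * (fBin b - val b (n+1)) := by
  have h1 : val (delBit b n) n = val b n := by
    apply Finset.sum_congr rfl
    intro i hi
    unfold term
    rw [delBit_lt b (Finset.mem_range.mp hi)]
  have h2 : tail (delBit b n) n = 2 * tail b (n+1) := by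
    unfold tail
    rw [← tsum_mul_left]
    apply tsum_congr
    intro i
    unfold term
    rw [delBit_ge b (by omega : n ≤ i + n)]
    have e1 : i + n + 1 = i + (n+1) := by omega
    rw [e1]
    have e2 : (2:ℝ)^(i + (n+1) + 1) = 2^(i + (n+1)) * 2 := by rw [pow_succ]
    have e3 : (2:ℝ)^(i + (n+1)) ≠ 0 := by positivity
    rw [e2]
    split <;> (field_simp; try ring)
  rw [fBin_eq (delBit b n) n, h1, h2, fBin_eq b (n+1)]
  ring

lemma wPre_delBit (b : ℕ → Bool) (n : ℕ) (hbn : b n = false) :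
    ∀ j, wPre (delBit b n) (n + j) = wPre b (n + 1 + j) := by
  intro j
  induction j with
  | zero =>
    have h1 : wPre (delBit b n) n = wPre b n := by
      apply Finset.sum_congr rfl
      intro i hi
      rw [delBit_lt b (Finset.mem_range.mp hi)]
    rw [Nat.add_zero, Nat.add_zero, h1, wPre_succ, hbn]
    simp
  | succ j ih =>
    have e1 : n + (j+1) = (n + j) + 1 := by omega
    have e2 : n + 1 + (j+1) = (n + 1 + j) + 1 := by omega
    rw [e1, e2, wPre_succ, wPre_succ, ih, delBit_ge b (by omega : n ≤ n + j)]
    have : n + j + 1 = n + 1 + j := by omega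
    rw [this]

lemma heavy_delBit {ρ : ℝ} {b : ℕ → Bool} {n : ℕ} (hb : Heavy ρ b) (hbn : b n = false)
    (hρ0 : 0 ≤ ρ) : Heavy ρ (delBit b n) := by
  apply heavy_of_le_succ hb n
  intro m hm
  obtain ⟨j, rfl⟩ := Nat.exists_eq_add_of_le hm
  have hw : wPre (delBit b n) (n + j) = wPre b (n + j + 1) := by
    rw [wPre_delBit b n hbn j]
    congr 1
    omega
  rw [hw]
  push_cast
  linarith

/-! ### insertion -/

def insBit (b : ℕ → Bool) (n : ℕ) : ℕ → Bool :=
  fun i => if i < n then b i else if i = n then true else b (i - 1)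

lemma insBit_lt (b : ℕ → Bool) {n i : ℕ} (h : i < n) : insBit b n i = b i := by
  unfold insBit; rw [if_pos h]

lemma insBit_self (b : ℕ → Bool) (n : ℕ) : insBit b n n = true := by
  unfold insBit; rw [if_neg (lt_irrefl n), if_pos rfl]

lemma insBit_gt (b : ℕ → Bool) {n i : ℕ} (h : n < i) : insBit b n i = b (i - 1) := by
  unfold insBit; rw [if_neg (by omega), if_neg (by omega)]

lemma fBin_insBit (b : ℕ → Bool) (n : ℕ) :
    fBin (insBit b n) = val b n + 1/2^(n+1) + (fBin b - val b n) / 2 := by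
  have h1 : val (insBit b n) (n+1) = val b n + 1/2^(n+1) := by
    unfold val
    rw [Finset.sum_range_succ]
    congr 1
    · apply Finset.sum_congr rfl
      intro i hi
      unfold term
      rw [insBit_lt b (Finset.mem_range.mp hi)]
    · unfold term
      rw [insBit_self b n, if_pos rfl]
  have h2 : tail (insBit b n) (n+1) = tail b n / 2 := by
    unfold tail
    rw [eq_div_iff (by norm_num : (2:ℝ) ≠ 0), ← tsum_mul_right]
    apply tsum_congr
    intro i
    unfold term
    rw [insBit_gt b (by omega : n < i + (n+1))]
    have e1 : i + (n + 1) - 1 = i + n := by omega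
    rw [e1]
    have e2 : (2:ℝ)^(i + (n+1) + 1) = 2^(i + n + 1) * 2 := by
      rw [show i + (n+1) + 1 = (i + n + 1) + 1 by omega, pow_succ]
    have e3 : (2:ℝ)^(i + n + 1) ≠ 0 := by positivity
    rw [e2]
    split <;> (field_simp; try ring)
  rw [fBin_eq (insBit b n) (n+1), h1, h2, fBin_eq b n]
  ring

lemma wPre_insBit (b : ℕ → Bool) (n : ℕ) :
    ∀ j, wPre (insBit b n) (n + 1 + j) = wPre b (n + j) + 1 := by
  intro j
  induction j with
  | zero =>
    have h1 : wPre (insBit b n) n = wPre b n := by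
      apply Finset.sum_congr rfl
      intro i hi
      rw [insBit_lt b (Finset.mem_range.mp hi)]
    rw [Nat.add_zero, Nat.add_zero, wPre_succ, h1, insBit_self b n]
    simp
  | succ j ih =>
    have e1 : n + 1 + (j+1) = (n + 1 + j) + 1 := by omega
    have e2 : n + (j+1) = (n + j) + 1 := by omega
    rw [e1, e2, wPre_succ, wPre_succ, ih, insBit_gt b (by omega : n < n + 1 + j)]
    have : n + 1 + j - 1 = n + j := by omega
    rw [this]
    split <;> omega

lemma heavy_insBit {ρ : ℝ} {b : ℕ → Bool} {n : ℕ} (hb : Heavy ρ b) (hρ1 : ρ ≤ 1) :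
    Heavy ρ (insBit b n) := by
  apply heavy_of_succ_le hb n
  intro m hm
  obtain ⟨j, rfl⟩ := Nat.exists_eq_add_of_le hm
  have hw : wPre (insBit b n) (n + j + 1) = wPre b (n + j) + 1 := by
    rw [show n + j + 1 = n + 1 + j by omega, wPre_insBit b n j]
  rw [hw]
  push_cast
  linarith

/-! ### dyadic expansions -/

def consB (c : Bool) (b : ℕ → Bool) : ℕ → Bool := fun i => if i = 0 then c else b (i-1)

lemma consB_zero (c : Bool) (b : ℕ → Bool) : consB c b 0 = c := rfl

lemma consB_succ (c : Bool) (b : ℕ → Bool) (i : ℕ) : consB c b (i+1) = b i := rfl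

lemma fBin_cons (c : Bool) (b : ℕ → Bool) :
    fBin (consB c b) = (if c then (1:ℝ) else 0)/2 + fBin b / 2 := by
  have h0 : val (consB c b) 1 = (if c then (1:ℝ) else 0)/2 := by
    unfold val
    rw [Finset.sum_range_one]
    unfold term
    rw [consB_zero, pow_one]
  have h1 : tail (consB c b) 1 = fBin b / 2 := by
    unfold tail fBin
    rw [eq_div_iff (by norm_num : (2:ℝ) ≠ 0), ← tsum_mul_right]
    apply tsum_congr
    intro i
    unfold term
    rw [consB_succ]
    have e2 : (2:ℝ)^(i + 1 + 1) = 2^(i + 1) * 2 := by rw [pow_succ]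
    have e3 : (2:ℝ)^(i + 1) ≠ 0 := by positivity
    rw [e2]
    split <;> (field_simp; try ring)
  rw [fBin_eq (consB c b) 1, h0, h1]

lemma fBin_false : fBin (fun _ => false) = 0 := by
  unfold fBin
  simp

lemma exists_bits_dyadic : ∀ (N j : ℕ), j < 2^N →
    ∃ b : ℕ → Bool, (∀ i, N ≤ i → b i = false) ∧ fBin b = (j:ℝ) / 2^N := by
  intro N
  induction N with
  | zero =>
    intro j hj
    interval_cases j
    exact ⟨fun _ => false, fun i _ => rfl, by rw [fBin_false]; norm_num⟩
  | succ N ih =>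
    intro j hj
    by_cases hcase : j < 2^N
    · obtain ⟨b, hb0, hbv⟩ := ih j hcase
      refine ⟨consB false b, ?_, ?_⟩
      · intro i hi
        have hi1 : i - 1 + 1 = i := by omega
        rw [← hi1, consB_succ]
        exact hb0 _ (by omega)
      · rw [fBin_cons, hbv]
        rw [if_neg (by simp)]
        rw [pow_succ]
        have h2 : (0:ℝ) < 2^N := by positivity
        field_simp
        try ring
    · obtain ⟨b, hb0, hbv⟩ := ih (j - 2^N) (by omega)
      refine ⟨consB true b, ?_, ?_⟩
      · intro i hi
        have hi1 : i - 1 + 1 = i := by omega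
        rw [← hi1, consB_succ]
        exact hb0 _ (by omega)
      · rw [fBin_cons, hbv, if_pos rfl]
        have hc : ((j - 2^N : ℕ) : ℝ) = (j:ℝ) - 2^N := by
          push_cast [Nat.cast_sub (by omega : 2^N ≤ j)]
          ring
        rw [hc, pow_succ]
        have h2 : (0:ℝ) < 2^N := by positivity
        field_simp
        try ring

lemma wPre_of_true_from (b : ℕ → Bool) (m : ℕ) (h : ∀ j, m ≤ j → b j = true) :
    ∀ j, wPre b (m + j) = wPre b m + j := by
  intro j
  induction j with
  | zero => rfl
  | succ j ih =>
    rw [show m + (j+1) = (m + j) + 1 from rfl, wPre_succ, ih, h (m+j) (by omega)]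
    simp
    omega

lemma exists_heavy_dyadic {ρ : ℝ} (hρ0 : 0 ≤ ρ) (hρ1 : ρ < 1) (m j : ℕ)
    (hj1 : 1 ≤ j) (hj2 : j ≤ 2^m) :
    ∃ c : ℕ → Bool, fBin c = (j:ℝ)/2^m ∧ Heavy ρ c := by
  obtain ⟨b, hb0, hbv⟩ := exists_bits_dyadic m (j-1) (by omega)
  set c : ℕ → Bool := fun i => if i < m then b i else true with hc
  have hctrue : ∀ i, m ≤ i → c i = true := by
    intro i hi; simp only [hc]; rw [if_neg (by omega)]
  refine ⟨c, ?_, ?_⟩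
  · have h1 : val c m = val b m := by
      apply Finset.sum_congr rfl
      intro i hi
      have hilt : i < m := Finset.mem_range.mp hi
      unfold term
      have hci : c i = b i := by simp only [hc]; rw [if_pos hilt]
      rw [hci]
    have h2 : val b m = fBin b := by
      rw [fBin_eq b m, tail_eq_zero b m hb0, add_zero]
    have h3 : tail c m = (1/2:ℝ)^m := tail_eq_max c m hctrue
    rw [fBin_eq c m, h1, h2, h3, hbv]
    have hc2 : ((j - 1 : ℕ) : ℝ) = (j:ℝ) - 1 := by
      push_cast [Nat.cast_sub (by omega : 1 ≤ j)]
      ring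
    rw [hc2, div_pow, one_pow]
    have h2m : (0:ℝ) < 2^m := by positivity
    field_simp
    ring
  · apply heavy_of_eventually
    obtain ⟨M0, hM0⟩ : ∃ M0 : ℕ, (m:ℝ) ≤ M0 * (1 - ρ) := by
      refine ⟨Nat.ceil ((m:ℝ) / (1 - ρ)), ?_⟩
      rw [← div_le_iff₀ (by linarith)]
      exact Nat.le_ceil _
    filter_upwards [eventually_ge_atTop (max m M0)] with M hM
    have hMm : m ≤ M := le_trans (le_max_left _ _) hM
    have hMM0 : M0 ≤ M := le_trans (le_max_right _ _) hM
    obtain ⟨j', rfl⟩ := Nat.exists_eq_add_of_le hMm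
    rw [wPre_of_true_from c m hctrue j']
    have hcast : (M0:ℝ) ≤ (m:ℝ) + j' := by exact_mod_cast hMM0
    have h2 : (M0:ℝ) * (1-ρ) ≤ ((m:ℝ)+j') * (1-ρ) :=
      mul_le_mul_of_nonneg_right hcast (by linarith)
    have h3 : (0:ℝ) ≤ wPre c m := Nat.cast_nonneg _
    push_cast
    linarith

/-! ### special heavy facts -/

lemma wPre_of_false_from (b : ℕ → Bool) (N : ℕ) (h : ∀ j, N ≤ j → b j = false) :
    ∀ j, wPre b (N + j) = wPre b N := by
  intro j
  induction j with
  | zero => rfl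
  | succ j ih =>
    rw [show N + (j+1) = (N + j) + 1 from rfl, wPre_succ, ih, h (N+j) (by omega)]
    simp

lemma rho_eq_zero {ρ : ℝ} {b : ℕ → Bool} (hb : Heavy ρ b) (N : ℕ)
    (h0 : ∀ j, N ≤ j → b j = false) (hρ0 : 0 ≤ ρ) : ρ = 0 := by
  by_contra hne
  have hρ : 0 < ρ := lt_of_le_of_ne hρ0 (Ne.symm hne)
  apply not_heavy_of_frequently _ hb
  rw [frequently_atTop]
  intro M0
  obtain ⟨M1, hM1⟩ : ∃ M1 : ℕ, (wPre b N : ℝ) + 1 ≤ M1 * ρ := by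
    refine ⟨Nat.ceil (((wPre b N : ℝ)+1) / ρ), ?_⟩
    rw [← div_le_iff₀ hρ]
    exact Nat.le_ceil _
  refine ⟨max M0 (max N M1), le_max_left _ _, ?_⟩
  set M := max M0 (max N M1) with hM
  have hN : N ≤ M := le_trans (le_max_left _ _) (le_max_right _ _)
  have hM1' : M1 ≤ M := le_trans (le_max_right _ _) (le_max_right _ _)
  obtain ⟨j, hj⟩ := Nat.exists_eq_add_of_le hN
  rw [hj, wPre_of_false_from b N h0 j]
  rw [hj] at hM1'
  have hcast : (M1:ℝ) ≤ (N:ℝ) + j := by exact_mod_cast hM1'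
  have h2 : (M1:ℝ) * ρ ≤ ((N:ℝ) + j) * ρ := mul_le_mul_of_nonneg_right hcast (le_of_lt hρ)
  push_cast
  linarith

lemma all_true_of_heavy_one {b : ℕ → Bool} (hb : Heavy 1 b) : ∀ i, b i = true := by
  intro i
  by_contra hbi
  have hbi' : b i = false := by simpa using hbi
  apply not_heavy_of_frequently _ hb
  rw [frequently_atTop]
  intro M0
  refine ⟨max M0 (i+1), le_max_left _ _, ?_⟩
  set M := max M0 (i+1) with hM
  have hiM : i < M := lt_of_lt_of_le (Nat.lt_succ_self i) (le_max_right _ _)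
  have hw : wPre b M + 1 ≤ M := by
    have h1 : wPre b M = ∑ x ∈ (Finset.range M).erase i, (if b x then 1 else 0) := by
      rw [Finset.sum_erase _ (by rw [hbi']; simp)]
      rfl
    have h2 : ∑ x ∈ (Finset.range M).erase i, (if b x then 1 else 0) ≤
        ∑ _x ∈ (Finset.range M).erase i, 1 :=
      Finset.sum_le_sum (fun x _ => by split <;> omega)
    rw [Finset.sum_const, smul_eq_mul, mul_one,
      Finset.card_erase_of_mem (Finset.mem_range.mpr hiM), Finset.card_range] at h2
    omega
  have hcast : (wPre b M : ℝ) + 1 ≤ (M:ℝ) := by exact_mod_cast hw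
  push_cast
  linarith

lemma fBin_allTrue : fBin (fun _ => true) = 1 := by
  have h : ∀ n : ℕ, (if (fun _ => true) n then (1:ℝ) else 0) / 2^(n+1) = (1/2)*(1/2:ℝ)^n := by
    intro n
    rw [if_pos rfl]
    rw [div_pow, one_pow, pow_succ]
    ring
  unfold fBin
  rw [tsum_congr h, tsum_mul_left, tsum_geometric_two]
  norm_num

lemma fBin_eq_one_of_heavy_one {b : ℕ → Bool} (hb : Heavy 1 b) : fBin b = 1 := by
  have h : b = fun _ => true := funext (all_true_of_heavy_one hb)
  rw [h, fBin_allTrue]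

end HQSS


open HQSS

set_option maxHeartbeats 1000000 in
/-- Quasi self-similarity of the set of heavy channels:
`H_n(ρ,k) = H_{n+1}(ρ,2k-1) ∪ H_{n+1}(ρ,2k)` and
`2·H_{n+1}(ρ,2k-1) - (k-1)2^{-n} ⊆ H_n(ρ,k) ⊆ 2·H_{n+1}(ρ,2k) - k·2^{-n}`. -/
theorem heavy_quasi_self_similar (ρ : ℝ) (hρ : ρ ∈ Set.Icc (0 : ℝ) 1) (n k : ℕ)
    (hk1 : 1 ≤ k) (hk2 : k ≤ 2 ^ n) :
    HnSet ρ n k = HnSet ρ (n + 1) (2 * k - 1) ∪ HnSet ρ (n + 1) (2 * k) ∧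
    (fun x => 2 * x - ((k : ℝ) - 1) / 2 ^ n) '' HnSet ρ (n + 1) (2 * k - 1) ⊆ HnSet ρ n k ∧
    HnSet ρ n k ⊆ (fun x => 2 * x - (k : ℝ) / 2 ^ n) '' HnSet ρ (n + 1) (2 * k) := by
  obtain ⟨hρ0, hρ1⟩ := hρ
  have h2n : (0:ℝ) < 2^n := by positivity
  have h2n1 : (0:ℝ) < 2^(n+1) := by positivity
  have hpow : (2:ℝ)^(n+1) = 2^n * 2 := pow_succ 2 n
  have hpowN : (2:ℕ)^(n+1) = 2^n * 2 := pow_succ 2 n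
  have hc1 : ((2*k - 1 : ℕ) : ℝ) = 2*(k:ℝ) - 1 := by
    rw [Nat.cast_sub (by omega : 1 ≤ 2*k)]; push_cast; ring
  have hc2 : ((2*k : ℕ) : ℝ) = 2*(k:ℝ) := by push_cast; ring
  have hkR : (1:ℝ) ≤ (k:ℝ) := by exact_mod_cast hk1
  have hk2R : (k:ℝ) ≤ 2^n := by exact_mod_cast hk2
  have hhalf : ((1:ℝ)/2)^(n+1) = 1/2^(n+1) := by rw [div_pow, one_pow]
  have hhalfn : ((1:ℝ)/2)^n = 1/2^n := by rw [div_pow, one_pow]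
  have hdiv1 : ∀ a c : ℝ, a/2^(n+1) ≤ c/2^(n+1) → a ≤ c := by
    intro a c h
    have := mul_le_mul_of_nonneg_right h (le_of_lt h2n1)
    rwa [div_mul_cancel₀ _ (ne_of_gt h2n1), div_mul_cancel₀ _ (ne_of_gt h2n1)] at this
  have hdivn : ∀ a c : ℝ, a/2^n ≤ c/2^n → a ≤ c := by
    intro a c h
    have := mul_le_mul_of_nonneg_right h (le_of_lt h2n)
    rwa [div_mul_cancel₀ _ (ne_of_gt h2n), div_mul_cancel₀ _ (ne_of_gt h2n)] at this
  have hdivle1 : ∀ a c : ℝ, a ≤ c → a/2^(n+1) ≤ c/2^(n+1) := fun a c h =>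
    (div_le_div_iff₀ h2n1 h2n1).mpr (mul_le_mul_of_nonneg_right h (le_of_lt h2n1))
  have eA2 : ((k:ℝ)-1)/2^n = (2*(k:ℝ)-2)/2^(n+1) := by rw [hpow]; field_simp
  have eB2 : (k:ℝ)/2^n = (2*(k:ℝ))/2^(n+1) := by rw [hpow]; field_simp
  have hE1 : HnSet ρ (n+1) (2*k-1) =
      Hset ρ ∩ Set.Icc (((k:ℝ)-1)/2^n) ((2*(k:ℝ)-1)/2^(n+1)) := by
    unfold HnSet
    rw [hc1]
    have e : (2*(k:ℝ) - 1 - 1)/2^(n+1) = ((k:ℝ)-1)/2^n := by rw [hpow]; field_simp; ring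
    rw [e]
  have hE2 : HnSet ρ (n+1) (2*k) =
      Hset ρ ∩ Set.Icc ((2*(k:ℝ)-1)/2^(n+1)) ((k:ℝ)/2^n) := by
    unfold HnSet
    rw [hc2]
    have e : (2*(k:ℝ))/2^(n+1) = (k:ℝ)/2^n := eB2.symm
    rw [e]
  have hmid1 : ((k:ℝ)-1)/2^n ≤ (2*(k:ℝ)-1)/2^(n+1) := by
    rw [eA2]; exact hdivle1 _ _ (by linarith)
  have hmid2 : (2*(k:ℝ)-1)/2^(n+1) ≤ (k:ℝ)/2^n := by
    rw [eB2]; exact hdivle1 _ _ (by linarith)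
  refine ⟨?_, ?_, ?_⟩
  · -- Part 1
    rw [hE1, hE2, ← Set.inter_union_distrib_left,
      Set.Icc_union_Icc_eq_Icc hmid1 hmid2]
    rfl
  · -- Part 2
    rw [hE1]
    rintro _ ⟨x, ⟨⟨b, hbx, hbH⟩, hxlo, hxhi⟩, rfl⟩
    simp only
    have hsplit : fBin b = val b (n+1) + tail b (n+1) := fBin_eq b (n+1)
    have hval : val b (n+1) = (natVal b (n+1) : ℝ) / 2^(n+1) := val_eq b (n+1)
    have htl : 0 ≤ tail b (n+1) := tail_nonneg b (n+1)
    have htu : tail b (n+1) ≤ 1/2^(n+1) := by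
      have := tail_le b (n+1); rwa [hhalf] at this
    have hxeq : x = (natVal b (n+1) : ℝ)/2^(n+1) + tail b (n+1) := by
      rw [← hval, ← hsplit, hbx]
    have hplus : ((natVal b (n+1) : ℝ)+1)/2^(n+1)
        = (natVal b (n+1) : ℝ)/2^(n+1) + 1/2^(n+1) := by ring
    have hm2hiN : natVal b (n+1) + 1 ≤ 2*k := by
      have h1 : (natVal b (n+1) : ℝ) ≤ 2*(k:ℝ) - 1 := hdiv1 _ _ (by linarith)
      have h2 : (natVal b (n+1) : ℝ) + 1 ≤ 2*(k:ℝ) := by linarith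
      exact_mod_cast h2
    have hm2loN : 2*k ≤ natVal b (n+1) + 3 := by
      have h1 : 2*(k:ℝ) - 2 ≤ (natVal b (n+1) : ℝ) + 1 := by
        apply hdiv1
        rw [hplus]
        linarith [eA2 ▸ hxlo]
      have h2 : 2*(k:ℝ) ≤ (natVal b (n+1) : ℝ) + 3 := by linarith
      exact_mod_cast h2
    constructor
    · -- the Heavy part
      have hcases : natVal b (n+1) + 3 = 2*k ∨ natVal b (n+1) + 2 = 2*k ∨
          natVal b (n+1) + 1 = 2*k := by omega
      rcases hcases with hB | hA | hC
      · -- m2 = 2k-3 : endpoint with all-ones tail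
        have hk2' : 2 ≤ k := by omega
        have hm2R : (natVal b (n+1) : ℝ) = 2*(k:ℝ) - 3 := by
          have : (natVal b (n+1) : ℝ) + 3 = 2*(k:ℝ) := by exact_mod_cast hB
          linarith
        have htail_ge : 1/2^(n+1) ≤ tail b (n+1) := by
          have hlo' : (2*(k:ℝ)-2)/2^(n+1) ≤ x := by rw [← eA2]; exact hxlo
          have e3 : (2*(k:ℝ)-2)/2^(n+1) = (2*(k:ℝ)-3)/2^(n+1) + 1/2^(n+1) := by ring
          have e4 : (natVal b (n+1) : ℝ)/2^(n+1) = (2*(k:ℝ)-3)/2^(n+1) := by rw [hm2R]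
          linarith [hxeq]
        have htail_eq : tail b (n+1) = 1/2^(n+1) := le_antisymm htu htail_ge
        have hcomb : x = (2*(k:ℝ)-2)/2^(n+1) := by
          rw [hxeq, htail_eq, hm2R]; ring
        have hρlt : ρ < 1 := by
          rcases lt_or_eq_of_le hρ1 with h | h
          · exact h
          · exfalso
            have hone : fBin b = 1 := fBin_eq_one_of_heavy_one (h ▸ hbH)
            rw [hbx] at hone
            rw [hcomb] at hone
            rw [div_eq_one_iff_eq (ne_of_gt h2n1)] at hone
            rw [hpow] at hone
            linarith
        obtain ⟨c, hcv, hcH⟩ := exists_heavy_dyadic hρ0 hρlt n (k-1)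
          (by omega) (by omega)
        refine ⟨c, ?_, hcH⟩
        rw [hcv]
        have hcast : ((k-1:ℕ):ℝ) = (k:ℝ) - 1 := by
          rw [Nat.cast_sub hk1]; push_cast; ring
        rw [hcast]
        rw [hcomb, ← eA2]
        ring
      · -- m2 = 2k-2 : generic case, delete bit n
        have hrec := natVal_succ b n
        cases hbn : b n with
        | true =>
          rw [hbn] at hrec
          simp at hrec
          omega
        | false =>
          rw [hbn] at hrec
          simp at hrec
          have hv : natVal b n + 1 = k := by omega
          refine ⟨delBit b n, ?_, heavy_delBit hbH hbn hρ0⟩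
          rw [fBin_delBit b n, hbx, val_eq b n, val_eq b (n+1)]
          have hvR : (natVal b n : ℝ) = (k:ℝ) - 1 := by
            have : (natVal b n : ℝ) + 1 = (k:ℝ) := by exact_mod_cast hv
            linarith
          have hm2R : (natVal b (n+1) : ℝ) = 2*(k:ℝ) - 2 := by
            have : (natVal b (n+1) : ℝ) + 2 = 2*(k:ℝ) := by exact_mod_cast hA
            linarith
          rw [hvR, hm2R, ← eA2]
          ring
      · -- m2 = 2k-1 : endpoint with all-zeros tail
        have hm2R : (natVal b (n+1) : ℝ) = 2*(k:ℝ) - 1 := by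
          have : (natVal b (n+1) : ℝ) + 1 = 2*(k:ℝ) := by exact_mod_cast hC
          linarith
        have htail0 : tail b (n+1) = 0 := by
          have e4 : (natVal b (n+1) : ℝ)/2^(n+1) = (2*(k:ℝ)-1)/2^(n+1) := by rw [hm2R]
          have := hxeq
          linarith [hxhi]
        have hb0 : ∀ j, n+1 ≤ j → b j = false := bits_false_of_tail_eq_zero b (n+1) htail0
        have hρz : ρ = 0 := rho_eq_zero hbH (n+1) hb0 hρ0
        obtain ⟨c, hcv, hcH⟩ := exists_heavy_dyadic hρ0 (by rw [hρz]; norm_num) n k hk1 hk2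
        refine ⟨c, ?_, hcH⟩
        rw [hcv]
        have hxv : x = (2*(k:ℝ)-1)/2^(n+1) := by
          rw [hxeq, htail0, hm2R]; ring
        rw [hxv, eB2, eA2]
        ring
    · -- the Icc part
      have eL : (2*(k:ℝ)-1)/2^(n+1) = ((k:ℝ)-1)/2^n + 1/2^(n+1) := by
        rw [hpow]; field_simp; ring
      have eU : (k:ℝ)/2^n = ((k:ℝ)-1)/2^n + 2/2^(n+1) := by
        rw [hpow]; field_simp; ring
      have e25 : (2:ℝ)/2^(n+1) = 2*(1/2^(n+1)) := by ring
      constructor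
      · linarith
      · linarith [e25]
  · -- Part 3
    rw [hE2]
    rintro y ⟨⟨b, hby, hbH⟩, hylo, hyhi⟩
    have hsplit : fBin b = val b n + tail b n := fBin_eq b n
    have hval : val b n = (natVal b n : ℝ) / 2^n := val_eq b n
    have htl : 0 ≤ tail b n := tail_nonneg b n
    have htu : tail b n ≤ 1/2^n := by
      have := tail_le b n; rwa [hhalfn] at this
    have hyeq : y = (natVal b n : ℝ)/2^n + tail b n := by
      rw [← hval, ← hsplit, hby]
    have hplus : ((natVal b n : ℝ)+1)/2^n = (natVal b n : ℝ)/2^n + 1/2^n := by ring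
    have hMhiN : natVal b n ≤ k := by
      have h1 : (natVal b n : ℝ) ≤ (k:ℝ) := hdivn _ _ (by linarith)
      exact_mod_cast h1
    have hMloN : k ≤ natVal b n + 2 := by
      have h1 : (k:ℝ) - 1 ≤ (natVal b n : ℝ) + 1 := by
        apply hdivn
        rw [hplus]
        linarith
      have h2 : (k:ℝ) ≤ (natVal b n : ℝ) + 2 := by linarith
      exact_mod_cast h2
    have eL : (2*(k:ℝ)-1)/2^(n+1) = ((k:ℝ)-1)/2^n/2 + (k:ℝ)/2^(n+1) := by
      rw [hpow]; field_simp; ring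
    have eU : (k:ℝ)/2^n = (k:ℝ)/2^n/2 + (k:ℝ)/2^(n+1) := by
      rw [hpow]; field_simp; ring
    have hIcc : y/2 + (k:ℝ)/2^(n+1) ∈
        Set.Icc ((2*(k:ℝ)-1)/2^(n+1)) ((k:ℝ)/2^n) := by
      constructor
      · rw [eL]; linarith
      · rw [eU]
        have : y/2 ≤ (k:ℝ)/2^n/2 := by linarith
        linarith
    have hfinal : (fun x => 2 * x - (k:ℝ)/2^n) (y/2 + (k:ℝ)/2^(n+1)) = y := by
      simp only
      rw [eB2]
      ring
    have hcases : natVal b n + 2 = k ∨ natVal b n + 1 = k ∨ natVal b n = k := by omega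
    rcases hcases with hB | hA | hC
    · -- M = k-2 : endpoint with all-ones tail
      have hMR : (natVal b n : ℝ) = (k:ℝ) - 2 := by
        have : (natVal b n : ℝ) + 2 = (k:ℝ) := by exact_mod_cast hB
        linarith
      have htail_ge : 1/2^n ≤ tail b n := by
        have e3 : ((k:ℝ)-1)/2^n = ((k:ℝ)-2)/2^n + 1/2^n := by ring
        have e4 : (natVal b n : ℝ)/2^n = ((k:ℝ)-2)/2^n := by rw [hMR]
        linarith [hyeq]
      have htail_eq : tail b n = 1/2^n := le_antisymm htu htail_ge
      have hyv : y = ((k:ℝ)-1)/2^n := by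
        rw [hyeq, htail_eq, hMR]; ring
      have hρlt : ρ < 1 := by
        rcases lt_or_eq_of_le hρ1 with h | h
        · exact h
        · exfalso
          have hone : fBin b = 1 := fBin_eq_one_of_heavy_one (h ▸ hbH)
          rw [hby] at hone
          rw [hyv] at hone
          rw [div_eq_one_iff_eq (ne_of_gt h2n)] at hone
          linarith
      obtain ⟨c, hcv, hcH⟩ := exists_heavy_dyadic hρ0 hρlt (n+1) (2*k-1)
        (by omega) (by have h := hpowN; omega)
      have hcval : fBin c = y/2 + (k:ℝ)/2^(n+1) := by
        rw [hcv, hc1, hyv, eA2]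
        ring
      exact ⟨y/2 + (k:ℝ)/2^(n+1), ⟨⟨c, hcval, hcH⟩, hIcc⟩, hfinal⟩
    · -- M = k-1 : generic case, insert a one at position n
      have hMR : (natVal b n : ℝ) = (k:ℝ) - 1 := by
        have : (natVal b n : ℝ) + 1 = (k:ℝ) := by exact_mod_cast hA
        linarith
      have hcval : fBin (insBit b n) = y/2 + (k:ℝ)/2^(n+1) := by
        rw [fBin_insBit b n, hby, hval, hMR, eA2]
        ring
      exact ⟨y/2 + (k:ℝ)/2^(n+1), ⟨⟨insBit b n, hcval, heavy_insBit hbH hρ1⟩, hIcc⟩, hfinal⟩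
    · -- M = k : endpoint with all-zeros tail
      have hMR : (natVal b n : ℝ) = (k:ℝ) := by exact_mod_cast hC
      have htail0 : tail b n = 0 := by
        have e4 : (natVal b n : ℝ)/2^n = (k:ℝ)/2^n := by rw [hMR]
        linarith [hyeq, hyhi]
      have hb0 : ∀ j, n ≤ j → b j = false := bits_false_of_tail_eq_zero b n htail0
      have hρz : ρ = 0 := rho_eq_zero hbH n hb0 hρ0
      have hyv : y = (k:ℝ)/2^n := by rw [hyeq, htail0, hMR]; ring
      obtain ⟨c, hcv, hcH⟩ := exists_heavy_dyadic hρ0 (by rw [hρz]; norm_num) (n+1) (2*k)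
        (by omega) (by have h := hpowN; omega)
      have hcval : fBin c = y/2 + (k:ℝ)/2^(n+1) := by
        rw [hcv, hc2, hyv, eB2]
        ring
      exact ⟨y/2 + (k:ℝ)/2^(n+1), ⟨⟨c, hcval, hcH⟩, hIcc⟩, hfinal⟩
end
end
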